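/- arXiv:2507.18601 — 4 statements merged into one kernel-verified Lean document; each statement's English description precedes it below -/
import Mathlib

section
/- Let s ≥ 1 and let λ = (λ_1 ≥ … ≥ λ_r) be a partition of s with r parts. Let π_λ be the set partition of {1,…,s} whose blocks are the consecutive intervals {λ_1+…+λ_{i−1}+1, …, λ_1+…+λ_i} for i = 1,…,r, and for m ≥ 1 let Disj(π_λ, m) be the number of set partitions η of {1,…,s} with exactly m blocks satisfying π_λ ∧ η = 0̂. Then, as an identity of polynomials in x (equivalently, for every real number x): (x)_{λ_1}(x)_{λ_2}⋯(x)_{λ_r} = Σ_{m=1}^{s} Disj(π_λ, m)·(x)_m. -/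
open Finset

lemma meet_bot_iff' {α : Type*} (η π : Setoid α) :
    η ⊓ π = ⊥ ↔ ∀ a b, η a b → π a b → a = b := by
  rw [eq_bot_iff, Setoid.le_def]
  exact ⟨fun h a b h1 h2 => h ⟨h1, h2⟩, fun h x y hxy => h x y hxy.1 hxy.2⟩

instance setoidFinite' {α : Type*} [Finite α] : Finite (Setoid α) :=
  Finite.of_injective (fun η => ⇑η) fun _ _ h =>
    Setoid.ext fun x y => iff_of_eq (congrFun (congrFun h x) y)

lemma natcard_sigma' {ι : Type*} [Fintype ι] (β : ι → Type*) [∀ i, Finite (β i)] :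
    Nat.card (Σ i, β i) = ∑ i, Nat.card (β i) := by
  letI := fun i => Fintype.ofFinite (β i)
  simp only [Nat.card_eq_fintype_card]
  exact Fintype.card_sigma

private lemma F_cast' {s r n : ℕ} {f : Fin s → Fin r}
    (F : ∀ i : Fin r, ({a : Fin s // f a = i} ↪ Fin n)) {i j : Fin r}
    (hj : i = j) (a : Fin s) (hi : f a = i) :
    F i ⟨a, hi⟩ = F j ⟨a, hi.trans hj⟩ := by subst hj; rfl

/-- Fiberwise-injective maps correspond to families of embeddings of the fibers. -/
def fiberEmbEquiv' {s r n : ℕ} (f : Fin s → Fin r) :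
    {g : Fin s → Fin n // ∀ a b, f a = f b → g a = g b → a = b} ≃
      ∀ i, ({a : Fin s // f a = i} ↪ Fin n) where
  toFun g i := ⟨fun a => g.1 a.1, fun a b h =>
    Subtype.ext (g.2 a.1 b.1 (a.2.trans b.2.symm) h)⟩
  invFun F := ⟨fun a => F (f a) ⟨a, rfl⟩, by
    intro a b hab hg
    have h1 : F (f a) ⟨b, hab.symm⟩ = F (f b) ⟨b, rfl⟩ := F_cast' F hab b hab.symm
    change (F (f a)) ⟨a, rfl⟩ = (F (f b)) ⟨b, rfl⟩ at hg
    rw [← h1] at hg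
    exact congrArg Subtype.val ((F (f a)).injective hg)⟩
  left_inv g := Subtype.ext rfl
  right_inv F := by
    funext i
    apply Function.Embedding.ext
    rintro ⟨a, ha⟩
    exact F_cast' F ha a rfl

/-- Maps with kernel exactly `η` correspond to embeddings of the quotient. -/
def kerFiberEquiv' {α β : Type*} (η : Setoid α) :
    {g : α → β // Setoid.ker g = η} ≃ (Quotient η ↪ β) where
  toFun g := ⟨Quotient.lift g.1 (fun a b h => by
      rw [← g.2] at h; exact h), by
    intro q1 q2
    induction q1 using Quotient.inductionOn with | h a =>
    induction q2 using Quotient.inductionOn with | h b =>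
    intro h
    apply Quotient.sound
    have : Setoid.ker g.1 a b := h
    rwa [g.2] at this⟩
  invFun e := ⟨fun a => e (Quotient.mk η a), Setoid.ext fun a b => by
    rw [Setoid.ker_def, e.injective.eq_iff, Quotient.eq]⟩
  left_inv g := Subtype.ext rfl
  right_inv e := by
    ext q
    induction q using Quotient.inductionOn with | h a =>
    rfl

lemma fiber_card' {s r : ℕ} (lam : Fin r → ℕ) (hsum : ∑ i, lam i = s)
    (f : Fin s → Fin r)
    (hf : ∀ a : Fin s, (∑ j ∈ Finset.Iio (f a), lam j) ≤ (a : ℕ) ∧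
        (a : ℕ) < (∑ j ∈ Finset.Iio (f a), lam j) + lam (f a)) (i : Fin r) :
    Fintype.card {a : Fin s // f a = i} = lam i := by
  classical
  have hcard : ∀ j : Fin r, Fintype.card {a : Fin s // f a = j}
      = (univ.filter (fun a => f a = j)).card := fun j => Fintype.card_subtype _
  have hle : ∀ j : Fin r, (univ.filter (fun a => f a = j)).card ≤ lam j := by
    intro j
    have h1 : (univ.filter (fun a => f a = j)).card ≤
        (Finset.Ico (∑ k ∈ Finset.Iio j, lam k) ((∑ k ∈ Finset.Iio j, lam k) + lam j)).card := by
      refine Finset.card_le_card_of_injOn (fun a => (a : ℕ)) ?_ ?_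
      · intro a ha
        simp only [Finset.mem_coe, mem_filter, mem_univ, true_and] at ha
        have h2 := hf a
        rw [ha] at h2
        simp only [Finset.mem_coe, Finset.mem_Ico]
        omega
      · intro a _ b _ hab
        exact Fin.ext hab
    simpa using h1
  have hsum2 : ∑ j, (univ.filter (fun a => f a = j)).card = s := by
    have := Finset.card_eq_sum_card_fiberwise (s := (univ : Finset (Fin s)))
      (t := (univ : Finset (Fin r))) (f := f) (fun a _ => mem_univ (f a))
    simpa using this.symm
  have := (Finset.sum_eq_sum_iff_of_le (fun j _ => hle j)).1 (by rw [hsum2, hsum]) i (mem_univ i)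
  rw [hcard]
  exact this

/-- `disjCount π m` is the number of set partitions (encoded as setoids) of `Fin s`
having exactly `m` blocks and whose meet with `π` is the partition into singletons. -/
noncomputable def disjCount {s : ℕ} (π : Setoid (Fin s)) (m : ℕ) : ℕ :=
  Nat.card {η : Setoid (Fin s) // η ⊓ π = ⊥ ∧ Nat.card (Quotient η) = m}

lemma count_eq' {s r : ℕ} (hs : 1 ≤ s) (lam : Fin r → ℕ) (hsum : ∑ i, lam i = s)
    (f : Fin s → Fin r)
    (hf : ∀ a : Fin s, (∑ j ∈ Finset.Iio (f a), lam j) ≤ (a : ℕ) ∧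
        (a : ℕ) < (∑ j ∈ Finset.Iio (f a), lam j) + lam (f a)) (n : ℕ) :
    ∏ i, Nat.descFactorial n (lam i)
      = ∑ m ∈ Finset.Icc 1 s, disjCount (Setoid.ker f) m * Nat.descFactorial n m := by
  classical
  set π := Setoid.ker f with hπ
  have hG1 : Nat.card {g : Fin s → Fin n // Setoid.ker g ⊓ π = ⊥}
      = ∏ i, Nat.descFactorial n (lam i) := by
    have e1 : {g : Fin s → Fin n // Setoid.ker g ⊓ π = ⊥} ≃
        {g : Fin s → Fin n // ∀ a b, f a = f b → g a = g b → a = b} :=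
      Equiv.subtypeEquivRight (fun g => by
        rw [meet_bot_iff']
        constructor
        · intro h a b hfa hga
          exact h a b (Setoid.ker_def.mpr hga) (Setoid.ker_def.mpr hfa)
        · intro h a b h1 h2
          exact h a b (Setoid.ker_def.mp h2) (Setoid.ker_def.mp h1))
    rw [Nat.card_congr (e1.trans (fiberEmbEquiv' f)), Nat.card_pi]
    refine Finset.prod_congr rfl (fun i _ => ?_)
    rw [Nat.card_eq_fintype_card, Fintype.card_embedding_eq, Fintype.card_fin,
      fiber_card' lam hsum f hf i]
  have hfib : ∀ η : Setoid (Fin s), Nat.card {g : Fin s → Fin n // Setoid.ker g = η}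
      = Nat.descFactorial n (Nat.card (Quotient η)) := by
    intro η
    rw [Nat.card_congr (kerFiberEquiv' (β := Fin n) η)]
    letI : Fintype (Quotient η) := Fintype.ofFinite _
    simp only [Nat.card_eq_fintype_card]
    rw [Fintype.card_embedding_eq, Fintype.card_fin]
  have hG2 : Nat.card {g : Fin s → Fin n // Setoid.ker g ⊓ π = ⊥}
      = ∑ m ∈ Finset.Icc 1 s, disjCount π m * Nat.descFactorial n m := by
    have e2 : {g : Fin s → Fin n // Setoid.ker g ⊓ π = ⊥} ≃
        Σ η : {η : Setoid (Fin s) // η ⊓ π = ⊥}, {g : Fin s → Fin n // Setoid.ker g = ↑η} :=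
      (Equiv.sigmaSubtypeFiberEquivSubtype (Setoid.ker)
        (p := fun g : Fin s → Fin n => Setoid.ker g ⊓ π = ⊥)
        (q := fun η => η ⊓ π = ⊥) (fun g => Iff.rfl)).symm
    letI : Fintype {η : Setoid (Fin s) // η ⊓ π = ⊥} := Fintype.ofFinite _
    rw [Nat.card_congr e2, natcard_sigma']
    have step : ∀ η : {η : Setoid (Fin s) // η ⊓ π = ⊥},
        Nat.card {g : Fin s → Fin n // Setoid.ker g = ↑η}
          = Nat.descFactorial n (Nat.card (Quotient η.1)) := fun η => hfib η.1
    rw [Finset.sum_congr rfl (fun η _ => step η)]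
    have hmaps : ∀ η : {η : Setoid (Fin s) // η ⊓ π = ⊥},
        Nat.card (Quotient η.1) ∈ Finset.Icc 1 s := by
      intro η
      rw [Finset.mem_Icc]
      constructor
      · have : Nonempty (Quotient η.1) := ⟨Quotient.mk _ ⟨0, hs⟩⟩
        exact Nat.one_le_iff_ne_zero.mpr Nat.card_pos.ne'
      · have hsur : Function.Surjective (Quotient.mk η.1) := fun q => Quotient.exists_rep q
        have := Nat.card_le_card_of_surjective _ hsur
        simpa using this
    rw [← Finset.sum_fiberwise_of_maps_to (g := fun η => Nat.card (Quotient η.1))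
      (fun η _ => hmaps η) (fun η => Nat.descFactorial n (Nat.card (Quotient η.1)))]
    refine Finset.sum_congr rfl (fun m hm => ?_)
    have : ∀ η ∈ univ.filter (fun η : {η : Setoid (Fin s) // η ⊓ π = ⊥} =>
        Nat.card (Quotient η.1) = m), Nat.descFactorial n (Nat.card (Quotient η.1))
          = Nat.descFactorial n m := by
      intro η hη
      rw [Finset.mem_filter] at hη
      rw [hη.2]
    rw [Finset.sum_congr rfl this, Finset.sum_const, smul_eq_mul]
    congr 1
    rw [← Fintype.card_subtype, ← Nat.card_eq_fintype_card]
    exact Nat.card_congr (Equiv.subtypeSubtypeEquivSubtypeInter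
      (fun η : Setoid (Fin s) => η ⊓ π = ⊥) (fun η => Nat.card (Quotient η) = m))
  rw [← hG1, hG2]

/-- Lemma (falling factorial version): `(x)_{λ₁} ⋯ (x)_{λ_r} = Σ_m Disj(π_λ, m) (x)_m`,
where `π_λ` is the set partition of `{1,…,s}` into consecutive intervals of lengths
`λ₁, …, λ_r` (encoded as the kernel of the function `f` sending a position to the
index of the interval containing it). -/
theorem stmt0 (s r : ℕ) (hs : 1 ≤ s) (lam : Fin r → ℕ)
    (hpos : ∀ i, 1 ≤ lam i) (hanti : Antitone lam) (hsum : ∑ i, lam i = s)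
    (f : Fin s → Fin r)
    (hf : ∀ a : Fin s, (∑ j ∈ Finset.Iio (f a), lam j) ≤ (a : ℕ) ∧
        (a : ℕ) < (∑ j ∈ Finset.Iio (f a), lam j) + lam (f a))
    (x : ℝ) :
    (∏ i, (descPochhammer ℝ (lam i)).eval x) =
      ∑ m ∈ Finset.Icc 1 s, (disjCount (Setoid.ker f) m : ℝ) * (descPochhammer ℝ m).eval x := by
  have hpoly : (∏ i, descPochhammer ℝ (lam i)) =
      ∑ m ∈ Finset.Icc 1 s, Polynomial.C ((disjCount (Setoid.ker f) m : ℝ)) *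
        descPochhammer ℝ m := by
    apply Polynomial.eq_of_infinite_eval_eq
    apply Set.Infinite.mono ?_ (Set.infinite_range_of_injective (Nat.cast_injective (R := ℝ)))
    rintro _ ⟨n, rfl⟩
    simp only [Set.mem_setOf_eq, Polynomial.eval_prod, Polynomial.eval_finset_sum,
      Polynomial.eval_mul, Polynomial.eval_C, descPochhammer_eval_eq_descFactorial]
    exact_mod_cast count_eq' hs lam hsum f hf n
  have := congrArg (Polynomial.eval x) hpoly
  simpa [Polynomial.eval_prod, Polynomial.eval_finset_sum] using this
end

section
/- Let s ≥ 1 and let λ = (λ_1 ≥ … ≥ λ_r) be a partition of s with r ≥ 2 parts. Let π_λ be the set partition of {1,…,s} whose blocks are the consecutive intervals {λ_1+…+λ_{i−1}+1, …, λ_1+…+λ_i} for i = 1,…,r, and for m ≥ 1 let Disj(π_λ, m) be the number of set partitions η of {1,…,s} with exactly m blocks satisfying π_λ ∧ η = 0̂. Then Σ_{m=1}^{s} (−1)^{m−1}·(m−1)!·Disj(π_λ, m) = 0. -/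
open Finset
attribute [local instance] Classical.propDecidable

section Ins
variable {γ : Type*}

/-- extend a setoid on `γ` to `Option γ`, sending `none` to block `t` (or a new block). -/
def insSetoid (ρ : Setoid γ) (t : Option (Quotient ρ)) : Setoid (Option γ) :=
  Setoid.ker (fun o => Option.elim o t (fun x => some (Quotient.mk ρ x)))

lemma comap_insSetoid (ρ : Setoid γ) (t : Option (Quotient ρ)) :
    Setoid.comap some (insSetoid ρ t) = ρ := by
  ext x y
  show (some (Quotient.mk ρ x) : Option (Quotient ρ)) = some (Quotient.mk ρ y) ↔ _
  simp only [Option.some.injEq]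
  exact ⟨fun h => Quotient.exact h, fun h => Quotient.sound h⟩

lemma insSetoid_injective (ρ : Setoid γ) : Function.Injective (insSetoid ρ) := by
  intro t t' h
  match t, t' with
  | none, none => rfl
  | some q, some q' =>
    obtain ⟨x, rfl⟩ := Quotient.exists_rep q
    have : insSetoid ρ (some ⟦x⟧) none (some x) := by
      show (some (⟦x⟧ : Quotient ρ)) = some (Quotient.mk ρ x); rfl
    rw [h] at this
    have : some q' = some (Quotient.mk ρ x) := this
    simp at this; rw [this]
  | none, some q =>
    obtain ⟨x, rfl⟩ := Quotient.exists_rep q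
    have : insSetoid ρ (some ⟦x⟧) none (some x) := by
      show (some (⟦x⟧ : Quotient ρ)) = some (Quotient.mk ρ x); rfl
    rw [← h] at this
    have h' : (none : Option (Quotient ρ)) = some (Quotient.mk ρ x) := this
    exact absurd h' (by simp)
  | some q, none =>
    obtain ⟨x, rfl⟩ := Quotient.exists_rep q
    have : insSetoid ρ (some ⟦x⟧) none (some x) := by
      show (some (⟦x⟧ : Quotient ρ)) = some (Quotient.mk ρ x); rfl
    rw [h] at this
    have h' : (none : Option (Quotient ρ)) = some (Quotient.mk ρ x) := this
    exact absurd h' (by simp)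

lemma insSetoid_surj (η : Setoid (Option γ)) (ρ : Setoid γ)
    (hρ : Setoid.comap some η = ρ) : ∃ t, insSetoid ρ t = η := by
  subst hρ
  set ρ := Setoid.comap some η with hρ
  by_cases hx : ∃ x : γ, η none (some x)
  · obtain ⟨x, hx⟩ := hx
    refine ⟨some (Quotient.mk ρ x), ?_⟩
    ext a b
    match a, b with
    | none, none => simp [insSetoid, Setoid.ker_def]
    | some u, some v =>
      show (some (Quotient.mk ρ u) : Option (Quotient ρ)) = some (Quotient.mk ρ v) ↔ _
      simp only [Option.some.injEq, Quotient.eq]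
      exact Iff.rfl
    | none, some v =>
      show (some (Quotient.mk ρ x) : Option (Quotient ρ)) = some (Quotient.mk ρ v) ↔ _
      simp only [Option.some.injEq, Quotient.eq]
      constructor
      · intro h; exact η.trans hx h
      · intro h; exact η.trans (η.symm hx) h
    | some u, none =>
      show (some (Quotient.mk ρ u) : Option (Quotient ρ)) = some (Quotient.mk ρ x) ↔ _
      simp only [Option.some.injEq, Quotient.eq]
      constructor
      · intro h; exact η.trans h (η.symm hx)
      · intro h; exact η.trans h hx
  · refine ⟨none, ?_⟩
    ext a b
    match a, b with
    | none, none => simp [insSetoid, Setoid.ker_def]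
    | some u, some v =>
      show (some (Quotient.mk ρ u) : Option (Quotient ρ)) = some (Quotient.mk ρ v) ↔ _
      simp only [Option.some.injEq, Quotient.eq]; exact Iff.rfl
    | none, some v =>
      show (none : Option (Quotient ρ)) = some (Quotient.mk ρ v) ↔ _
      simp only [(by simp : (none : Option (Quotient ρ)) ≠ some (Quotient.mk ρ v)), false_iff]
      exact fun h => hx ⟨v, h⟩
    | some u, none =>
      show (some (Quotient.mk ρ u) : Option (Quotient ρ)) = none ↔ _
      simp only [(by simp : (some (Quotient.mk ρ u) : Option (Quotient ρ)) ≠ none), false_iff]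
      exact fun h => hx ⟨u, η.symm h⟩

lemma card_insSetoid_none (ρ : Setoid γ) [Finite γ] :
    Nat.card (Quotient (insSetoid ρ none)) = Nat.card (Quotient ρ) + 1 := by
  have hsurj : Function.Surjective
      (fun o : Option γ => Option.elim o (none : Option (Quotient ρ)) (fun x => some (Quotient.mk ρ x))) := by
    rintro (_ | q)
    · exact ⟨none, rfl⟩
    · obtain ⟨x, rfl⟩ := Quotient.exists_rep q; exact ⟨some x, rfl⟩
  have e := Setoid.quotientKerEquivOfSurjective _ hsurj
  rw [show insSetoid ρ none = Setoid.ker _ from rfl, Nat.card_congr e, Finite.card_option]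

lemma card_insSetoid_some (ρ : Setoid γ) (q : Quotient ρ) [Finite γ] :
    Nat.card (Quotient (insSetoid ρ (some q))) = Nat.card (Quotient ρ) := by
  have hker : insSetoid ρ (some q) = Setoid.ker (fun o : Option γ => Option.elim o q (Quotient.mk ρ)) := by
    ext a b
    show (Option.elim a _ _ = Option.elim b _ _) ↔ (Option.elim a _ _ = Option.elim b _ _)
    match a, b with
    | none, none => simp
    | some u, some v => simp
    | none, some v => simp
    | some u, none => simp
  have hsurj : Function.Surjective (fun o : Option γ => Option.elim o q (Quotient.mk ρ)) := by
    intro p; obtain ⟨x, rfl⟩ := Quotient.exists_rep p; exact ⟨some x, rfl⟩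
  rw [hker, Nat.card_congr (Setoid.quotientKerEquivOfSurjective _ hsurj)]

end Ins

noncomputable instance setoidFintype {α : Type*} [Finite α] : Fintype (Setoid α) :=
  haveI : Finite (Setoid α) := Finite.of_injective (fun η => (η.r : α → α → Prop))
    (fun a b h => by cases a; cases b; congr)
  Fintype.ofFinite _

/-- the weight of a setoid -/
noncomputable def wgt {β : Type*} (η : Setoid β) : ℤ :=
  (-1) ^ (Nat.card (Quotient η) - 1) * (Nat.factorial (Nat.card (Quotient η) - 1) : ℤ)

lemma wgt_comap_equiv {α β : Type*} (e : α ≃ β) (η : Setoid β) :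
    wgt (Setoid.comap e η) = wgt η := by
  have : Nat.card (Quotient (Setoid.comap e η)) = Nat.card (Quotient η) :=
    Nat.card_congr (Quotient.congr e (fun a b => Iff.rfl))
  simp [wgt, this]

lemma sum_fiber_wgt {γ : Type*} [Fintype γ] [Nonempty γ] (ρ : Setoid γ) :
    ∑ t : Option (Quotient ρ), wgt (insSetoid ρ t) = 0 := by
  haveI : Nonempty (Quotient ρ) := Nonempty.map (Quotient.mk ρ) ‹Nonempty γ›
  obtain ⟨k, hk⟩ : ∃ k, Nat.card (Quotient ρ) = k + 1 := by
    have : 0 < Nat.card (Quotient ρ) := Nat.card_pos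
    exact ⟨Nat.card (Quotient ρ) - 1, by omega⟩
  have hnone : wgt (insSetoid ρ none) = (-1) ^ (k + 1) * ((k+1) * Nat.factorial k : ℤ) := by
    rw [wgt, card_insSetoid_none, hk]
    have h1 : k + 1 + 1 - 1 = k + 1 := rfl
    rw [h1, Nat.factorial_succ]
    push_cast; ring
  have hsome : ∀ q, wgt (insSetoid ρ (some q)) = (-1) ^ k * (Nat.factorial k : ℤ) := by
    intro q; rw [wgt, card_insSetoid_some, hk]; simp
  rw [Fintype.sum_option]
  simp only [hnone, hsome]
  rw [Finset.sum_const, Finset.card_univ, ← Nat.card_eq_fintype_card, hk]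
  push_cast [pow_succ]
  ring

lemma sum_wgt {β : Type*} [Fintype β] [Nonempty β] :
    ∑ η : Setoid β, wgt η = if Nat.card β = 1 then 1 else 0 := by
  by_cases h1 : Nat.card β = 1
  · rw [if_pos h1]
    have hsub : Subsingleton β := Nat.card_eq_one_iff_unique.mp h1 |>.1
    have huniq : ∀ η : Setoid β, η = ⊤ := fun η =>
      Setoid.ext fun x y => ⟨fun _ => trivial, fun _ => Subsingleton.elim x y ▸ η.refl x⟩
    have : (Finset.univ : Finset (Setoid β)) = {⊤} := by
      apply Finset.eq_singleton_iff_unique_mem.mpr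
      exact ⟨Finset.mem_univ _, fun η _ => huniq η⟩
    rw [this, Finset.sum_singleton, wgt]
    haveI : Nonempty (Quotient (⊤ : Setoid β)) := Nonempty.map (Quotient.mk ⊤) ‹Nonempty β›
    have hq : Nat.card (Quotient (⊤ : Setoid β)) = 1 := by
      rw [Nat.card_eq_one_iff_unique]
      exact ⟨Quotient.subsingleton_iff.mpr rfl, ‹_›⟩
    rw [hq]
    simp
  · rw [if_neg h1]
    -- card β ≥ 2
    have h2 : 2 ≤ Nat.card β := by
      have : 0 < Nat.card β := Nat.card_pos
      omega
    obtain ⟨a⟩ := ‹Nonempty β›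
    set γ := {b : β // b ≠ a} with hγ
    have hne : Nonempty γ := by
      have : Nontrivial β := Finite.one_lt_card_iff_nontrivial.mp (by omega)
      obtain ⟨b, hb⟩ := exists_ne a
      exact ⟨⟨b, hb⟩⟩
    have e : Option γ ≃ β := Equiv.optionSubtypeNe a
    -- transfer
    have hbij : Function.Bijective (fun ρ : Setoid (Option γ) => Setoid.comap e.symm ρ) := by
      constructor
      · intro ρ ρ' h
        ext x y
        have := Setoid.ext_iff.mp h (e x) (e y)
        simpa [Setoid.comap_rel] using this
      · intro η
        refine ⟨Setoid.comap e η, ?_⟩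
        ext x y
        simp [Setoid.comap_rel]
    rw [← Fintype.sum_bijective _ hbij wgt wgt (fun ρ => (wgt_comap_equiv e.symm ρ).symm)]
    -- group by restriction to γ
    rw [← Finset.sum_fiberwise Finset.univ (fun η : Setoid (Option γ) => Setoid.comap some η)
      wgt]
    rw [← (Finset.sum_const_zero (s := (Finset.univ : Finset (Setoid γ))))]
    apply Finset.sum_congr rfl
    intro ρ _
    have : Finset.univ.filter (fun η : Setoid (Option γ) => Setoid.comap some η = ρ) =
        Finset.univ.image (insSetoid ρ) := by
      ext η
      simp only [Finset.mem_filter, Finset.mem_univ, true_and, Finset.mem_image]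
      constructor
      · intro h; obtain ⟨t, ht⟩ := insSetoid_surj η ρ h; exact ⟨t, ht⟩
      · rintro ⟨t, rfl⟩; exact comap_insSetoid ρ t
    rw [this, Finset.sum_image (fun t _ t' _ h => insSetoid_injective ρ h)]
    exact sum_fiber_wgt ρ

lemma card_quotient_comap_mk {β : Type*} (σ : Setoid β) (t : Setoid (Quotient σ)) :
    Nat.card (Quotient (Setoid.comap (@Quotient.mk' _ σ) t)) = Nat.card (Quotient t) := by
  have hsurj : Function.Surjective ((Quotient.mk'' : Quotient σ → Quotient t) ∘ (@Quotient.mk' _ σ)) :=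
    (Quotient.mk''_surjective).comp (Quotient.mk''_surjective)
  rw [Nat.card_congr (Setoid.comapQuotientEquiv _ t)]
  rw [Set.range_eq_univ.mpr hsurj]
  exact Nat.card_congr (Equiv.Set.univ _)

lemma sum_wgt_above {β : Type*} [Fintype β] [Nonempty β] (σ : Setoid β) :
    ∑ η ∈ Finset.univ.filter (fun η => σ ≤ η), wgt η = if σ = ⊤ then 1 else 0 := by
  haveI : Nonempty (Quotient σ) := Nonempty.map (Quotient.mk σ) ‹Nonempty β›
  haveI : Fintype (Quotient σ) := Fintype.ofFinite _
  have h1 : ∑ η ∈ Finset.univ.filter (fun η : Setoid β => σ ≤ η), wgt η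
      = ∑ x : {η : Setoid β // σ ≤ η}, wgt x.1 :=
    Finset.sum_subtype (Finset.univ.filter (fun η : Setoid β => σ ≤ η))
      (fun η => by simp) wgt
  rw [h1]
  have h2 : ∑ x : {η : Setoid β // σ ≤ η}, wgt x.1
      = ∑ t : Setoid (Quotient σ), wgt t := by
    apply Fintype.sum_equiv (Setoid.correspondence σ).toEquiv
    intro x
    have hx : x.1 = Setoid.comap (@Quotient.mk' _ σ) ((Setoid.correspondence σ).toEquiv x) := rfl
    rw [hx, wgt, wgt, card_quotient_comap_mk]
  rw [h2, sum_wgt]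
  congr 1
  simp only [eq_iff_iff]
  constructor
  · intro h
    rw [← Quotient.subsingleton_iff (s := σ)]
    exact (Nat.card_eq_one_iff_unique.mp h).1
  · intro h
    rw [Nat.card_eq_one_iff_unique]
    exact ⟨Quotient.subsingleton_iff.mpr h, ‹_›⟩

noncomputable def mymu {L : Type*} [Fintype L] [PartialOrder L] [OrderBot L] (x : L) : ℤ :=
  (if x = ⊥ then 1 else 0) -
    ∑ σ ∈ (Finset.univ.filter (fun σ : L => σ < x)).attach, mymu σ.1
termination_by (Finset.univ.filter (fun σ : L => σ < x)).card
decreasing_by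
  have hσ : σ.1 < x := (Finset.mem_filter.mp σ.2).2
  apply Finset.card_lt_card
  constructor
  · intro τ hτ
    simp only [Finset.mem_filter, Finset.mem_univ, true_and] at hτ ⊢
    exact hτ.trans hσ
  · intro hsub
    have : σ.1 ∈ Finset.univ.filter (fun τ : L => τ < x) := by
      simp [hσ]
    have := hsub this
    simp at this

lemma sum_mymu {L : Type*} [Fintype L] [PartialOrder L] [OrderBot L] (x : L) :
    ∑ σ ∈ Finset.univ.filter (fun σ => σ ≤ x), mymu σ = if x = ⊥ then 1 else 0 := by
  have hd : Finset.univ.filter (fun σ : L => σ ≤ x)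
      = insert x (Finset.univ.filter (fun σ : L => σ < x)) := by
    ext σ
    simp only [Finset.mem_filter, Finset.mem_univ, true_and, Finset.mem_insert]
    constructor
    · intro h
      rcases lt_or_eq_of_le h with h | h
      · exact Or.inr h
      · exact Or.inl h
    · rintro (rfl | h)
      · exact le_refl _
      · exact le_of_lt h
  rw [hd, Finset.sum_insert (by simp [lt_irrefl])]
  rw [mymu, ← Finset.sum_attach (Finset.univ.filter (fun σ : L => σ < x)) mymu]
  ring

/-- For a partition `λ` of `s` with at least two parts,
`Σ_{m=1}^{s} (−1)^{m−1} (m−1)! Disj(π_λ, m) = 0`, where `π_λ` is the set partition of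
`{1,…,s}` into consecutive intervals of lengths `λ₁, …, λ_r` (encoded as the kernel of
the function `f` sending a position to the index of the interval containing it). -/
theorem stmt2 (s r : ℕ) (hs : 1 ≤ s) (hr : 2 ≤ r) (lam : Fin r → ℕ)
    (hpos : ∀ i, 1 ≤ lam i) (hanti : Antitone lam) (hsum : ∑ i, lam i = s)
    (f : Fin s → Fin r)
    (hf : ∀ a : Fin s, (∑ j ∈ Finset.Iio (f a), lam j) ≤ (a : ℕ) ∧
        (a : ℕ) < (∑ j ∈ Finset.Iio (f a), lam j) + lam (f a)) :
    (∑ m ∈ Finset.Icc 1 s,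
        (-1 : ℤ) ^ (m - 1) * (Nat.factorial (m - 1) : ℤ) *
          (disjCount (Setoid.ker f) m : ℤ)) = 0 := by
  classical
  haveI : NeZero r := ⟨by omega⟩
  haveI : Nonempty (Fin s) := ⟨⟨0, hs⟩⟩
  set π : Setoid (Fin s) := Setoid.ker f with hπdef
  -- π is not the top setoid
  have hftop : π ≠ ⊤ := by
    have h0 : f ⟨0, hs⟩ = 0 := by
      by_contra h
      have hmem : (0 : Fin r) ∈ Finset.Iio (f ⟨0, hs⟩) := by
        rw [Finset.mem_Iio]
        exact (Fin.pos_iff_ne_zero' _).mpr h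
      have h1 := (hf ⟨0, hs⟩).1
      have h2 : lam 0 ≤ ∑ j ∈ Finset.Iio (f ⟨0, hs⟩), lam j :=
        Finset.single_le_sum (fun i _ => Nat.zero_le _) hmem
      have h3 := hpos 0
      simp only [Fin.val_mk] at h1
      omega
    have hlast : f ⟨s - 1, by omega⟩ ≠ 0 := by
      intro h
      have h2 := (hf ⟨s - 1, by omega⟩).2
      rw [h] at h2
      have hIio : Finset.Iio (0 : Fin r) = ∅ := by
        ext j
        simp only [Finset.mem_Iio, Finset.notMem_empty, iff_false]
        intro hj
        rw [Fin.lt_def] at hj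
        simp at hj
      rw [hIio, Finset.sum_empty] at h2
      simp only [Fin.val_mk, zero_add] at h2
      have hsum' : lam 0 + ∑ i ∈ Finset.univ.erase 0, lam i = s := by
        rw [Finset.add_sum_erase _ lam (Finset.mem_univ 0), hsum]
      have hcard : (Finset.univ.erase (0 : Fin r)).card = r - 1 := by
        rw [Finset.card_erase_of_mem (Finset.mem_univ 0), Finset.card_univ, Fintype.card_fin]
      have hge : r - 1 ≤ ∑ i ∈ Finset.univ.erase 0, lam i := by
        calc r - 1 = ∑ _i ∈ Finset.univ.erase (0 : Fin r), 1 := by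
              rw [Finset.sum_const, hcard, smul_eq_mul, mul_one]
          _ ≤ _ := Finset.sum_le_sum (fun i _ => hpos i)
      omega
    intro htop
    have hrel : π ⟨0, hs⟩ ⟨s - 1, by omega⟩ := by rw [htop]; trivial
    have : f ⟨0, hs⟩ = f ⟨s - 1, by omega⟩ := hrel
    rw [h0] at this
    exact hlast this.symm
  -- block counts lie in [1, s]
  have hcb : ∀ η : Setoid (Fin s), Nat.card (Quotient η) ∈ Finset.Icc 1 s := by
    intro η
    haveI : Nonempty (Quotient η) := Nonempty.map (Quotient.mk η) ‹Nonempty (Fin s)›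
    rw [Finset.mem_Icc]
    constructor
    · exact Nat.card_pos
    · have := Nat.card_le_card_of_surjective (Quotient.mk η) Quotient.mk_surjective
      simpa using this
  have hdisj : ∀ m, (disjCount π m : ℤ) =
      ((Finset.univ.filter
        (fun η : Setoid (Fin s) => η ⊓ π = ⊥ ∧ Nat.card (Quotient η) = m)).card : ℤ) := by
    intro m
    rw [disjCount, Nat.card_eq_fintype_card, Fintype.card_subtype]
  have e1 : ∀ m ∈ Finset.Icc 1 s,
      (-1 : ℤ) ^ (m - 1) * (Nat.factorial (m - 1) : ℤ) * (disjCount π m : ℤ)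
      = ∑ η ∈ (Finset.univ.filter (fun η : Setoid (Fin s) => η ⊓ π = ⊥)).filter
          (fun η => Nat.card (Quotient η) = m), wgt η := by
    intro m _
    rw [Finset.filter_filter, hdisj m]
    have hw : ∀ η ∈ Finset.univ.filter
        (fun η : Setoid (Fin s) => (η ⊓ π = ⊥) ∧ Nat.card (Quotient η) = m),
        wgt η = (-1 : ℤ) ^ (m - 1) * (Nat.factorial (m - 1) : ℤ) := by
      intro η hη
      rw [wgt, (Finset.mem_filter.mp hη).2.2]
    rw [Finset.sum_congr rfl hw, Finset.sum_const, nsmul_eq_mul]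
    ring
  rw [Finset.sum_congr rfl e1,
    Finset.sum_fiberwise_of_maps_to
      (fun η hη => hcb η) wgt]
  rw [Finset.sum_filter]
  have e2 : ∀ η : Setoid (Fin s), (if η ⊓ π = ⊥ then wgt η else 0)
      = ∑ σ ∈ Finset.univ, (if σ ≤ η ⊓ π then wgt η * mymu σ else 0) := by
    intro η
    rw [← Finset.sum_filter, ← Finset.mul_sum, sum_mymu (η ⊓ π)]
    by_cases h : η ⊓ π = ⊥ <;> simp [h]
  rw [Finset.sum_congr rfl (fun η _ => e2 η), Finset.sum_comm]
  apply Finset.sum_eq_zero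
  intro σ _
  by_cases hσπ : σ ≤ π
  · have hσtop : σ ≠ ⊤ := fun h => hftop (top_le_iff.mp (h ▸ hσπ))
    simp only [le_inf_iff, hσπ, and_true]
    rw [← Finset.sum_filter, ← Finset.sum_mul, sum_wgt_above σ, if_neg hσtop, zero_mul]
  · have hno : ∀ η : Setoid (Fin s), ¬ (σ ≤ η ⊓ π) := fun η h => hσπ (le_trans h inf_le_right)
    exact Finset.sum_eq_zero (fun η _ => if_neg (hno η))
end

section
/- Let r ≥ 1 and let σ_1,…,σ_r be finitely supported permutations of ℕ, each of which is a single cycle, with σ_j of length k_j ≥ 2 (i.e., the support of σ_j has cardinality k_j). Assume the family jointly intersects: the graph on {1,…,r} in which j and j′ are adjacent whenever the supports of σ_j and σ_{j′} intersect is connected. Then 2·|supp(σ_1) ∪ ⋯ ∪ supp(σ_r)| ≤ |σ_1σ_2⋯σ_r| − r + (k_1+⋯+k_r) + 2, where |τ| denotes the Cayley distance of a finitely supported permutation τ. -/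
open Equiv Equiv.Perm



/-- support as a set -/
def sp (τ : Equiv.Perm ℕ) : Set ℕ := {x | τ x ≠ x}

/-- class of x under relation R -/
def cls (R : ℕ → ℕ → Prop) (x : ℕ) : Set ℕ := {y | R x y}

/-- number of classes of R meeting S -/
noncomputable def nclasses (R : ℕ → ℕ → Prop) (S : Set ℕ) : ℕ := ((cls R) '' S).ncard

/-- one (undirected) step along an edge of l -/
def estep (l : List (ℕ × ℕ)) (x y : ℕ) : Prop :=
  ∃ p ∈ l, (p.1 = x ∧ p.2 = y) ∨ (p.1 = y ∧ p.2 = x)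

/-- reachability in the graph of l -/
def Reach (l : List (ℕ × ℕ)) : ℕ → ℕ → Prop := Relation.ReflTransGen (estep l)

/-- endpoints of l -/
def EP (l : List (ℕ × ℕ)) : Set ℕ := {x | ∃ p ∈ l, p.1 = x ∨ p.2 = x}

/-- product of the swaps of l -/
def swProd (l : List (ℕ × ℕ)) : Equiv.Perm ℕ := (l.map fun p => Equiv.swap p.1 p.2).prod

lemma reach_equiv (l : List (ℕ × ℕ)) : Equivalence (Reach l) := by
  refine ⟨fun x => Relation.ReflTransGen.refl, ?_, fun h h' => h.trans h'⟩
  · intro x y h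
    exact @Std.Symm.symm _ _ (@Relation.ReflTransGen.stdSymm _ (estep l)
      ⟨fun a b ⟨p, hp, h⟩ => ⟨p, hp, h.symm⟩⟩) _ _ h

lemma sc_equiv (τ : Equiv.Perm ℕ) : Equivalence τ.SameCycle :=
  ⟨Equiv.Perm.SameCycle.refl τ, Equiv.Perm.SameCycle.symm, Equiv.Perm.SameCycle.trans⟩

lemma cls_eq_of_rel {R : ℕ → ℕ → Prop} (hR : Equivalence R) {x y : ℕ} (h : R x y) :
    cls R x = cls R y := by
  ext z; exact ⟨fun hz => hR.trans (hR.symm h) hz, fun hz => hR.trans h hz⟩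

lemma rel_of_cls_eq {R : ℕ → ℕ → Prop} (hR : Equivalence R) {x y : ℕ}
    (h : cls R x = cls R y) : R x y := by
  have : y ∈ cls R y := hR.refl y
  rw [← h] at this; exact this

/-- trajectories of `swap a b * τ` agree with those of `τ` on orbits avoiding a,b. -/
lemma zpow_swap_mul_eq (τ : Equiv.Perm ℕ) (a b x : ℕ)
    (ha : ¬τ.SameCycle x a) (hb : ¬τ.SameCycle x b) (i : ℤ) :
    ((Equiv.swap a b * τ) ^ i) x = (τ ^ i) x := by
  have hxa : ∀ j : ℤ, (τ ^ j) x ≠ a := fun j h => ha ⟨j, h⟩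
  have hxb : ∀ j : ℤ, (τ ^ j) x ≠ b := fun j h => hb ⟨j, h⟩
  induction i using Int.induction_on with
  | zero => simp
  | succ i ih =>
    have h1 : ((Equiv.swap a b * τ) ^ ((i : ℤ) + 1)) x
        = (Equiv.swap a b * τ) (((Equiv.swap a b * τ) ^ (i : ℤ)) x) := by
      rw [add_comm, zpow_add, zpow_one]; rfl
    rw [h1, ih]
    have h2 : ((τ : Equiv.Perm ℕ) ^ ((i : ℤ) + 1)) x = τ ((τ ^ (i : ℤ)) x) := by
      rw [add_comm, zpow_add, zpow_one]; rfl
    rw [h2]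
    show Equiv.swap a b (τ ((τ ^ (i : ℤ)) x)) = _
    have : τ ((τ ^ (i : ℤ)) x) = (τ ^ ((i : ℤ) + 1)) x := by
      rw [add_comm, zpow_add, zpow_one]; rfl
    rw [this, Equiv.swap_apply_of_ne_of_ne (hxa _) (hxb _)]
  | pred i ih =>
    have h1 : ((Equiv.swap a b * τ) ^ (-(i : ℤ) - 1)) x
        = (Equiv.swap a b * τ)⁻¹ (((Equiv.swap a b * τ) ^ (-(i : ℤ))) x) := by
      rw [sub_eq_add_neg, add_comm, zpow_add, zpow_neg_one]; rfl
    rw [h1, ih]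
    have h2 : ((τ : Equiv.Perm ℕ) ^ (-(i : ℤ) - 1)) x = τ⁻¹ ((τ ^ (-(i : ℤ))) x) := by
      rw [sub_eq_add_neg, add_comm, zpow_add, zpow_neg_one]; rfl
    rw [h2, mul_inv_rev, Equiv.swap_inv]
    show τ⁻¹ (Equiv.swap a b ((τ ^ (-(i : ℤ))) x)) = _
    rw [Equiv.swap_apply_of_ne_of_ne (hxa _) (hxb _)]

/-- orbits avoiding a,b are the same for τ and swap a b * τ -/
lemma sameCycle_swap_mul_iff (τ : Equiv.Perm ℕ) (a b x : ℕ)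
    (ha : ¬τ.SameCycle x a) (hb : ¬τ.SameCycle x b) (y : ℕ) :
    τ.SameCycle x y ↔ (Equiv.swap a b * τ).SameCycle x y := by
  constructor
  · rintro ⟨i, hi⟩; exact ⟨i, by rw [zpow_swap_mul_eq τ a b x ha hb i]; exact hi⟩
  · rintro ⟨i, hi⟩; exact ⟨i, by rw [← zpow_swap_mul_eq τ a b x ha hb i]; exact hi⟩

section B
variable (τ : Equiv.Perm ℕ)

lemma zpow_fixed {x : ℕ} (h : τ x = x) (i : ℤ) : (τ ^ i) x = x :=
  Equiv.Perm.zpow_apply_eq_self_of_apply_eq_self h i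

lemma orbit_subset_sp (a : ℕ) (i : ℤ) : (τ ^ i) a ∈ {x | τ x ≠ x} ∪ {a} := by
  by_cases h : τ ((τ ^ i) a) = (τ ^ i) a
  · right
    have h2 : (τ ^ i) (τ a) = (τ ^ i) a := by
      have e1 : (τ ^ i) (τ a) = τ ((τ ^ i) a) := by
        rw [← Equiv.Perm.mul_apply, ← Equiv.Perm.mul_apply, ← zpow_one_add, ← zpow_add_one,
          show (1:ℤ) + i = i + 1 by ring]
      rw [e1, h]
    have h3 : τ a = a := (τ ^ i).injective h2
    exact zpow_fixed τ h3 i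
  · left; exact h

/-- a finitely supported perm has a positive period at every point -/
lemma exists_pos_period (hfin : {x | τ x ≠ x}.Finite) (a : ℕ) :
    ∃ p : ℕ, 0 < p ∧ (τ ^ p) a = a := by
  have hfin2 : ({x | τ x ≠ x} ∪ {a}).Finite := hfin.union (Set.finite_singleton a)
  obtain ⟨m, -, n, -, hmn, heq⟩ := Set.Infinite.exists_ne_map_eq_of_mapsTo
    (s := (Set.univ : Set ℕ)) (f := fun i : ℕ => (τ ^ (i:ℤ)) a)
    Set.infinite_univ (fun i _ => orbit_subset_sp τ a i) hfin2
  have main : ∀ m n : ℕ, m < n → (τ ^ ((m:ℕ):ℤ)) a = (τ ^ ((n:ℕ):ℤ)) a →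
      ∃ p : ℕ, 0 < p ∧ (τ ^ p) a = a := by
    intro m n h heq'
    refine ⟨n - m, by omega, ?_⟩
    have h2 : (τ ^ (m:ℤ)) ((τ ^ ((n:ℤ) - (m:ℤ))) a) = (τ ^ (m:ℤ)) a := by
      rw [← Equiv.Perm.mul_apply, ← zpow_add,
        show (m:ℤ) + ((n:ℤ)-(m:ℤ)) = (n:ℤ) by ring, heq']
    have h3 := (τ ^ (m:ℤ)).injective h2
    rw [← zpow_natCast, show (((n - m : ℕ)):ℤ) = (n:ℤ) - (m:ℤ) by omega]
    exact h3
  rcases lt_or_gt_of_ne hmn with h | h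
  · exact main m n h heq
  · exact main n m h heq.symm

/-- merging: if a,b are in different τ-orbits then they are in the same
orbit of swap a b * τ. -/
lemma sameCycle_swap_mul_of_not (hfin : {x | τ x ≠ x}.Finite) {a b : ℕ}
    (hab : a ≠ b) (h : ¬τ.SameCycle a b) : (Equiv.swap a b * τ).SameCycle a b := by
  obtain ⟨τ', hτ'⟩ : ∃ t, t = Equiv.swap a b * τ := ⟨_, rfl⟩
  rw [← hτ']
  by_contra h'
  have hτ : τ = Equiv.swap a b * τ' := by rw [hτ', ← mul_assoc, Equiv.swap_mul_self, one_mul]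
  have hfin' : {x | τ' x ≠ x}.Finite := by
    apply Set.Finite.subset (hfin.union (Set.toFinite {a, b}))
    intro x hx
    by_cases hxs : τ x = x
    · right
      by_contra hx2
      simp only [Set.mem_insert_iff, Set.mem_singleton_iff, not_or] at hx2
      refine hx (show τ' x = x from ?_)
      rw [hτ']
      show Equiv.swap a b (τ x) = x
      rw [hxs, Equiv.swap_apply_of_ne_of_ne hx2.1 hx2.2]
    · left; exact hxs
  obtain ⟨p, hp, hpa⟩ := exists_pos_period τ' hfin' a
  have hex : ∃ p, 0 < p ∧ (τ' ^ p) a = a := ⟨p, hp, hpa⟩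
  have hq0 : 0 < Nat.find hex := (Nat.find_spec hex).1
  have hqa : (τ' ^ (Nat.find hex)) a = a := (Nat.find_spec hex).2
  obtain ⟨q, hq⟩ : ∃ t, t = Nat.find hex := ⟨_, rfl⟩
  rw [← hq] at hq0 hqa
  have hmin : ∀ m, 0 < m → m < q → (τ' ^ m) a ≠ a := fun m hm0 hmq hma =>
    Nat.find_min hex (hq ▸ hmq) ⟨hm0, hma⟩
  have hb' : ∀ i : ℤ, (τ' ^ i) a ≠ b := fun i hi => h' ⟨i, hi⟩
  have happ : ∀ z, τ z = Equiv.swap a b (τ' z) := by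
    intro z
    rw [hτ']
    show τ z = Equiv.swap a b (Equiv.swap a b (τ z))
    rw [Equiv.swap_apply_self]
  have key : ∀ n, n ≤ q - 1 → (τ ^ n) a = (τ' ^ n) a := by
    intro n hn
    induction n with
    | zero => simp
    | succ m ih =>
      have hm : m ≤ q - 1 := by omega
      have hna : (τ' ^ (m+1)) a ≠ a := hmin (m+1) (by omega) (by omega)
      have hnb : (τ' ^ (m+1)) a ≠ b := by
        have := hb' ((m+1 : ℕ) : ℤ)
        rwa [zpow_natCast] at this
      calc (τ ^ (m+1)) a = τ ((τ ^ m) a) := by rw [pow_succ', Equiv.Perm.mul_apply]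
        _ = τ ((τ' ^ m) a) := by rw [ih hm]
        _ = Equiv.swap a b (τ' ((τ' ^ m) a)) := happ _
        _ = Equiv.swap a b ((τ' ^ (m+1)) a) := by rw [pow_succ', Equiv.Perm.mul_apply]
        _ = (τ' ^ (m+1)) a := Equiv.swap_apply_of_ne_of_ne hna hnb
  have hfinal : (τ ^ q) a = b := by
    have hq1 : q - 1 + 1 = q := by omega
    calc (τ ^ q) a = τ ((τ ^ (q-1)) a) := by
          conv_lhs => rw [← hq1, pow_succ', Equiv.Perm.mul_apply]
      _ = τ ((τ' ^ (q-1)) a) := by rw [key (q-1) le_rfl]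
      _ = Equiv.swap a b (τ' ((τ' ^ (q-1)) a)) := happ _
      _ = Equiv.swap a b ((τ' ^ q) a) := by
          conv_rhs => rw [← hq1, pow_succ', Equiv.Perm.mul_apply]
      _ = Equiv.swap a b a := by rw [hqa]
      _ = b := Equiv.swap_apply_left a b
  exact h ⟨q, by rw [zpow_natCast]; exact hfinal⟩

end B




section C
attribute [local instance] Classical.propDecidable

lemma nclasses_helper {Q : ℕ → ℕ → Prop} (hQ : Equivalence Q) {a b : ℕ}
    {S T : Set ℕ} (hS : S.Finite) (hT : T ⊆ S) (haS : a ∈ S) (hbS : b ∈ S)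
    (hsplit : ∀ x ∈ S, x ∉ T → Q x a ∨ Q x b)
    (havoid : ∀ x ∈ T, ¬Q x a ∧ ¬Q x b) :
    nclasses Q S = (cls Q '' T).ncard + (if Q a b then 1 else 2) := by
  have haT : a ∉ T := fun h => (havoid a h).1 (hQ.refl a)
  have hbT : b ∉ T := fun h => (havoid b h).2 (hQ.refl b)
  have himg : cls Q '' S = (cls Q '' T) ∪ {cls Q a, cls Q b} := by
    apply Set.Subset.antisymm
    · rintro z ⟨x, hx, rfl⟩
      by_cases hxT : x ∈ T
      · exact Or.inl ⟨x, hxT, rfl⟩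
      · rcases hsplit x hx hxT with h | h
        · exact Or.inr (Or.inl (cls_eq_of_rel hQ h))
        · exact Or.inr (Or.inr (cls_eq_of_rel hQ h))
    · rintro z (⟨x, hx, rfl⟩ | h | h)
      · exact ⟨x, hT hx, rfl⟩
      · exact ⟨a, haS, h.symm⟩
      · exact ⟨b, hbS, h.symm⟩
  have hdisj : Disjoint (cls Q '' T) {cls Q a, cls Q b} := by
    rw [Set.disjoint_right]
    rintro z (h | h) ⟨x, hx, rfl⟩
    · exact (havoid x hx).1 (rel_of_cls_eq hQ h)
    · exact (havoid x hx).2 (rel_of_cls_eq hQ h)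
  rw [nclasses, himg, Set.ncard_union_eq hdisj (((hS.subset hT).image _))
    (Set.toFinite _)]
  congr 1
  by_cases hab : Q a b
  · rw [if_pos hab, cls_eq_of_rel hQ hab, Set.pair_eq_singleton, Set.ncard_singleton]
  · rw [if_neg hab, Set.ncard_pair (fun h => hab (rel_of_cls_eq hQ h))]

lemma classes_core {R R' : ℕ → ℕ → Prop} (hR : Equivalence R) (hR' : Equivalence R')
    {a b : ℕ} {S : Set ℕ} (hS : S.Finite) (haS : a ∈ S) (hbS : b ∈ S)
    (HT : ∀ x, ¬R x a → ¬R x b → ∀ y, (R x y ↔ R' x y))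
    (HT' : ∀ x, ¬R' x a → ¬R' x b → ∀ y, (R x y ↔ R' x y)) :
    ∃ d : ℕ, nclasses R S = d + (if R a b then 1 else 2) ∧
      nclasses R' S = d + (if R' a b then 1 else 2) := by
  classical
  set T : Set ℕ := {x | x ∈ S ∧ ¬R x a ∧ ¬R x b} with hTdef
  have hT : T ⊆ S := fun x hx => hx.1
  have h1 : cls R '' T = cls R' '' T := by
    apply Set.image_congr
    intro x hx
    ext y
    exact HT x hx.2.1 hx.2.2 y
  have e1 := nclasses_helper hR hS hT haS hbS
    (fun x hx hxT => by
      by_contra hc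
      push_neg at hc
      exact hxT ⟨hx, hc⟩)
    (fun x hx => hx.2)
  have e2 := nclasses_helper hR' hS hT haS hbS
    (fun x hx hxT => by
      by_contra hc
      push_neg at hc
      have h3 := HT' x hc.1 hc.2
      by_cases h4 : R x a
      · exact hc.1 ((h3 a).1 h4)
      · by_cases h5 : R x b
        · exact hc.2 ((h3 b).1 h5)
        · exact hxT ⟨hx, h4, h5⟩)
    (fun x hx => ⟨fun h => hx.2.1 ((HT x hx.2.1 hx.2.2 a).2 h),
                  fun h => hx.2.2 ((HT x hx.2.1 hx.2.2 b).2 h)⟩)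
  refine ⟨(cls R '' T).ncard, e1, ?_⟩
  rw [e2, h1]

lemma nclasses_insert_le (R : ℕ → ℕ → Prop) (x : ℕ) (S : Set ℕ) :
    nclasses R (insert x S) ≤ nclasses R S + 1 := by
  rw [nclasses, Set.image_insert_eq]
  exact Set.ncard_insert_le _ _

lemma nclasses_insert_isolated {R : ℕ → ℕ → Prop} (hR : Equivalence R) {x : ℕ} {S : Set ℕ}
    (hS : S.Finite) (hx : x ∉ S) (hiso : ∀ y, R x y → y = x) :
    nclasses R (insert x S) = nclasses R S + 1 := by
  have hnm : cls R x ∉ cls R '' S := by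
    rintro ⟨y, hy, hcy⟩
    exact hx (hiso y (rel_of_cls_eq hR hcy.symm) ▸ hy)
  rw [nclasses, Set.image_insert_eq, Set.ncard_insert_of_notMem hnm (hS.image _)]
  rfl

lemma nclasses_le_one {R : ℕ → ℕ → Prop} (hR : Equivalence R) {S : Set ℕ} (hS : S.Finite)
    (h : ∀ x ∈ S, ∀ y ∈ S, R x y) : nclasses R S ≤ 1 := by
  rcases S.eq_empty_or_nonempty with rfl | ⟨x₀, hx₀⟩
  · simp [nclasses]
  · have : cls R '' S ⊆ {cls R x₀} := by
      rintro z ⟨x, hx, rfl⟩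
      exact cls_eq_of_rel hR (h x hx x₀ hx₀)
    calc nclasses R S ≤ ({cls R x₀} : Set (Set ℕ)).ncard :=
          Set.ncard_le_ncard this (Set.toFinite _)
      _ = 1 := Set.ncard_singleton _

lemma nclasses_congr {R R' : ℕ → ℕ → Prop} (S : Set ℕ) (h : ∀ x y, R x y ↔ R' x y) :
    nclasses R S = nclasses R' S := by
  have : R = R' := by ext x y; exact h x y
  rw [this]

end C

section D

lemma reach_mono {l l' : List (ℕ × ℕ)} (hsub : ∀ p ∈ l, p ∈ l') {x y : ℕ}
    (h : Reach l x y) : Reach l' x y :=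
  Relation.ReflTransGen.mono (r := estep l) (p := estep l') (fun _ _ ⟨p, hp, h⟩ => ⟨p, hsub p hp, h⟩) _ _ h

lemma reach_symm {l : List (ℕ × ℕ)} {x y : ℕ} (h : Reach l x y) : Reach l y x :=
  @Std.Symm.symm _ _ (@Relation.ReflTransGen.stdSymm _ (estep l)
    ⟨fun a b ⟨p, hp, h⟩ => ⟨p, hp, h.symm⟩⟩) _ _ h

lemma reach_edge {l : List (ℕ × ℕ)} {a b : ℕ} (h : (a, b) ∈ l) : Reach l a b :=
  Relation.ReflTransGen.single ⟨(a, b), h, Or.inl ⟨rfl, rfl⟩⟩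

/-- paths avoiding the component of a,b (w.r.t. the small list) don't use the new edge -/
lemma reach_untouched {l' : List (ℕ × ℕ)} {a b x : ℕ}
    (ha : ¬Reach l' x a) (hb : ¬Reach l' x b) (y : ℕ) :
    Reach l' x y ↔ Reach ((a, b) :: l') x y := by
  constructor
  · exact reach_mono (fun p hp => List.mem_cons_of_mem _ hp)
  · intro h
    induction h with
    | refl => exact Relation.ReflTransGen.refl
    | tail h1 h2 ih =>
      rename_i u v
      rcases h2 with ⟨p, hp, hcase⟩
      rcases List.mem_cons.1 hp with rfl | hp'
      · exfalso
        rcases hcase with ⟨h3, h4⟩ | ⟨h3, h4⟩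
        · refine ha ?_; rw [show a = u from h3]; exact ih
        · refine hb ?_; rw [show b = u from h4]; exact ih
      · exact Relation.ReflTransGen.tail ih ⟨p, hp', hcase⟩

lemma reach_untouched' {l' : List (ℕ × ℕ)} {a b x : ℕ}
    (ha : ¬Reach ((a, b) :: l') x a) (hb : ¬Reach ((a, b) :: l') x b) (y : ℕ) :
    Reach l' x y ↔ Reach ((a, b) :: l') x y := by
  constructor
  · exact reach_mono (fun p hp => List.mem_cons_of_mem _ hp)
  · intro h
    induction h with
    | refl => exact Relation.ReflTransGen.refl
    | tail h1 h2 ih =>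
      rename_i u v
      rcases h2 with ⟨p, hp, hcase⟩
      rcases List.mem_cons.1 hp with rfl | hp'
      · exfalso
        rcases hcase with ⟨h3, h4⟩ | ⟨h3, h4⟩
        · refine ha ?_; rw [show a = u from h3]
          exact reach_mono (fun p hp => List.mem_cons_of_mem _ hp) ih
        · refine hb ?_; rw [show b = u from h4]
          exact reach_mono (fun p hp => List.mem_cons_of_mem _ hp) ih
      · exact Relation.ReflTransGen.tail ih ⟨p, hp', hcase⟩

lemma reach_isolated {l : List (ℕ × ℕ)} {x y : ℕ} (hx : x ∉ EP l) (h : Reach l x y) :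
    y = x := by
  induction h with
  | refl => rfl
  | tail h1 h2 ih =>
    rename_i u v
    subst ih
    rcases h2 with ⟨p, hp, hcase⟩
    exfalso
    rcases hcase with ⟨h3, h4⟩ | ⟨h3, h4⟩
    · exact hx ⟨p, hp, Or.inl h3⟩
    · exact hx ⟨p, hp, Or.inr h4⟩

/-- if the new edge is already implied, reachability is unchanged -/
lemma reach_cons_redundant {l' : List (ℕ × ℕ)} {a b : ℕ} (hab : Reach l' a b) (x y : ℕ) :
    Reach ((a, b) :: l') x y ↔ Reach l' x y := by
  constructor
  · intro h
    induction h with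
    | refl => exact Relation.ReflTransGen.refl
    | tail h1 h2 ih =>
      rcases h2 with ⟨p, hp, hcase⟩
      rcases List.mem_cons.1 hp with rfl | hp'
      · rcases hcase with ⟨h3, h4⟩ | ⟨h3, h4⟩
        · exact ih.trans (h3 ▸ h4 ▸ hab)
        · exact ih.trans (h3 ▸ h4 ▸ reach_symm hab)
      · exact Relation.ReflTransGen.tail ih ⟨p, hp', hcase⟩
  · exact reach_mono (fun p hp => List.mem_cons_of_mem _ hp)

lemma EP_cons (a b : ℕ) (l : List (ℕ × ℕ)) :
    EP ((a, b) :: l) = insert a (insert b (EP l)) := by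
  ext x
  simp only [EP, Set.mem_setOf_eq, List.mem_cons, Set.mem_insert_iff]
  constructor
  · rintro ⟨p, rfl | hp, hc⟩
    · rcases hc with h | h
      · exact Or.inl h.symm
      · exact Or.inr (Or.inl h.symm)
    · exact Or.inr (Or.inr ⟨p, hp, hc⟩)
  · rintro (rfl | rfl | ⟨p, hp, hc⟩)
    · exact ⟨(x, b), Or.inl rfl, Or.inl rfl⟩
    · exact ⟨(a, x), Or.inl rfl, Or.inr rfl⟩
    · exact ⟨p, Or.inr hp, hc⟩

lemma EP_finite (l : List (ℕ × ℕ)) : (EP l).Finite := by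
  induction l with
  | nil =>
    convert Set.finite_empty
    ext x; simp [EP]
  | cons p l ih =>
    obtain ⟨a, b⟩ := p
    rw [EP_cons]
    exact (ih.insert b).insert a

lemma EP_nil : EP [] = ∅ := by ext x; simp [EP]

lemma swProd_cons (a b : ℕ) (l : List (ℕ × ℕ)) :
    swProd ((a, b) :: l) = Equiv.swap a b * swProd l := by
  simp [swProd]

lemma swProd_apply_of_not_mem {l : List (ℕ × ℕ)} {x : ℕ} (hx : x ∉ EP l) :
    swProd l x = x := by
  induction l with
  | nil => simp [swProd]
  | cons p l ih =>
    obtain ⟨a, b⟩ := p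
    rw [EP_cons] at hx
    simp only [Set.mem_insert_iff, not_or] at hx
    rw [swProd_cons, Equiv.Perm.mul_apply, ih hx.2.2,
      Equiv.swap_apply_of_ne_of_ne hx.1 hx.2.1]

lemma sp_swProd_subset (l : List (ℕ × ℕ)) : {x | swProd l x ≠ x} ⊆ EP l := by
  intro x hx
  by_contra h
  exact hx (swProd_apply_of_not_mem h)

/-- each point is connected to its image under swProd -/
lemma reach_apply (l : List (ℕ × ℕ)) (x : ℕ) : Reach l x (swProd l x) := by
  induction l with
  | nil => simp [swProd]; exact Relation.ReflTransGen.refl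
  | cons p l ih =>
    obtain ⟨a, b⟩ := p
    have hmono : ∀ {u v : ℕ}, Reach l u v → Reach ((a, b) :: l) u v :=
      fun h => reach_mono (fun p hp => List.mem_cons_of_mem _ hp) h
    rw [swProd_cons, Equiv.Perm.mul_apply]
    by_cases h1 : swProd l x = a
    · rw [h1, Equiv.swap_apply_left]
      exact (hmono ih).trans (h1 ▸ reach_edge (List.mem_cons_self))
    · by_cases h2 : swProd l x = b
      · rw [h2, Equiv.swap_apply_right]
        exact (hmono ih).trans (h2 ▸ reach_symm (reach_edge (List.mem_cons_self)))
      · rw [Equiv.swap_apply_of_ne_of_ne h1 h2]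
        exact hmono ih

/-- orbits refine components -/
lemma reach_of_sameCycle {l : List (ℕ × ℕ)} {x y : ℕ} (h : (swProd l).SameCycle x y) :
    Reach l x y := by
  obtain ⟨i, hi⟩ := h
  subst hi
  have key : ∀ i : ℤ, Reach l x ((swProd l ^ i) x) := by
    intro i
    induction i using Int.induction_on with
    | zero => exact Relation.ReflTransGen.refl
    | succ i ih =>
      have hz : ((swProd l) ^ ((i:ℤ) + 1)) x = swProd l (((swProd l) ^ (i:ℤ)) x) := by
        rw [show ((i:ℤ)+1) = 1 + (i:ℤ) by ring, zpow_one_add, Equiv.Perm.mul_apply]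
      rw [hz]
      exact ih.trans (reach_apply l _)
    | pred i ih =>
      have hz : swProd l (((swProd l) ^ (-(i:ℤ) - 1)) x) = ((swProd l) ^ (-(i:ℤ))) x := by
        rw [← Equiv.Perm.mul_apply]
        congr 1
        rw [← zpow_one_add]
        congr 1
        ring
      exact ih.trans (reach_symm (hz ▸ reach_apply l _))
  exact key i

end D

section E
attribute [local instance] Classical.propDecidable

lemma nclasses_empty (R : ℕ → ℕ → Prop) : nclasses R ∅ = 0 := by
  simp [nclasses]

lemma sp_finite_of_swProd (l : List (ℕ × ℕ)) : {x | swProd l x ≠ x}.Finite :=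
  (EP_finite l).subset (sp_swProd_subset l)

lemma orbit_core (τ' : Equiv.Perm ℕ) (a b : ℕ) {S : Set ℕ}
    (hS : S.Finite) (haS : a ∈ S) (hbS : b ∈ S) :
    ∃ d : ℕ, nclasses τ'.SameCycle S
        = d + (@ite ℕ (τ'.SameCycle a b) (Classical.propDecidable _) 1 2) ∧
      nclasses (Equiv.swap a b * τ').SameCycle S
        = d + (@ite ℕ ((Equiv.swap a b * τ').SameCycle a b) (Classical.propDecidable _) 1 2) := by
  refine classes_core (sc_equiv τ') (sc_equiv _) hS haS hbS
    (fun x hxa hxb y => sameCycle_swap_mul_iff τ' a b x hxa hxb y) ?_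
  intro x hxa hxb y
  have h := sameCycle_swap_mul_iff (Equiv.swap a b * τ') a b x hxa hxb y
  rw [← mul_assoc, Equiv.swap_mul_self, one_mul] at h
  exact h.symm

lemma reach_core (l' : List (ℕ × ℕ)) (a b : ℕ) {S : Set ℕ}
    (hS : S.Finite) (haS : a ∈ S) (hbS : b ∈ S) :
    ∃ d : ℕ, nclasses (Reach l') S = d + (if Reach l' a b then 1 else 2) ∧
      nclasses (Reach ((a, b) :: l')) S
        = d + (if Reach ((a, b) :: l') a b then 1 else 2) :=
  classes_core (reach_equiv l') (reach_equiv _) hS haS hbS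
    (fun x hxa hxb y => reach_untouched hxa hxb y)
    (fun x hxa hxb y => reach_untouched' hxa hxb y)

lemma sameCycle_isolated {τ : Equiv.Perm ℕ} {x : ℕ} (hx : τ x = x) {y : ℕ}
    (h : τ.SameCycle x y) : y = x := by
  obtain ⟨i, hi⟩ := h
  rw [zpow_fixed τ hx i] at hi
  exact hi.symm

lemma claimA : ∀ (l : List (ℕ × ℕ)), (∀ p ∈ l, p.1 ≠ p.2) →
    (EP l).ncard + nclasses (swProd l).SameCycle (EP l)
      ≤ l.length + 2 * nclasses (Reach l) (EP l) := by
  intro l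
  induction l with
  | nil =>
    intro _
    rw [EP_nil, nclasses_empty, nclasses_empty]
    simp
  | cons p l' IH =>
    obtain ⟨a, b⟩ := p
    intro hpairs
    have hab : a ≠ b := hpairs (a, b) (List.mem_cons_self)
    have IH' := IH (fun p hp => hpairs p (List.mem_cons_of_mem _ hp))
    have hfinE : (EP l').Finite := EP_finite l'
    have hτ'fin : {x | swProd l' x ≠ x}.Finite := sp_finite_of_swProd l'
    rw [EP_cons, swProd_cons, List.length_cons]
    have hedge : Reach ((a, b) :: l') a b := reach_edge (List.mem_cons_self)
    by_cases haE : a ∈ EP l' <;> by_cases hbE : b ∈ EP l'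
    · -- both old
      rw [Set.insert_eq_self.mpr hbE, Set.insert_eq_self.mpr haE]
      by_cases hR : Reach l' a b
      · have hcomp : nclasses (Reach ((a, b) :: l')) (EP l') = nclasses (Reach l') (EP l') :=
          nclasses_congr _ (fun x y => reach_cons_redundant hR x y)
        obtain ⟨d, hc', hc⟩ := orbit_core (swProd l') a b hfinE haE hbE
        have e1 : 1 ≤ (@ite ℕ ((swProd l').SameCycle a b) (Classical.propDecidable _) 1 2) ∧
            (@ite ℕ ((swProd l').SameCycle a b) (Classical.propDecidable _) 1 2) ≤ 2 := by
          split <;> omega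
        have e2 : 1 ≤ (@ite ℕ ((Equiv.swap a b * swProd l').SameCycle a b)
              (Classical.propDecidable _) 1 2) ∧
            (@ite ℕ ((Equiv.swap a b * swProd l').SameCycle a b)
              (Classical.propDecidable _) 1 2) ≤ 2 := by
          split <;> omega
        rw [hcomp]
        omega
      · have hnsc : ¬(swProd l').SameCycle a b := fun h => hR (reach_of_sameCycle h)
        have hsc : (Equiv.swap a b * swProd l').SameCycle a b :=
          sameCycle_swap_mul_of_not (swProd l') hτ'fin hab hnsc
        obtain ⟨d, hc', hc⟩ := orbit_core (swProd l') a b hfinE haE hbE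
        rw [if_neg hnsc] at hc'
        rw [if_pos hsc] at hc
        obtain ⟨d2, hk', hk⟩ := reach_core l' a b hfinE haE hbE
        rw [if_neg hR] at hk'
        rw [if_pos hedge] at hk
        omega
    · -- a old, b new
      rw [Set.insert_eq_self.mpr (Set.mem_insert_of_mem _ haE)]
      have hfix : swProd l' b = b := swProd_apply_of_not_mem hbE
      have hisoB : ∀ y, (swProd l').SameCycle b y → y = b := fun y h => sameCycle_isolated hfix h
      have hnsc : ¬(swProd l').SameCycle a b := fun h => hab (hisoB a h.symm)
      have hnR : ¬Reach l' a b := fun h => hab (reach_isolated hbE (reach_symm h))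
      have hSfin : (insert b (EP l')).Finite := hfinE.insert b
      have haS : a ∈ insert b (EP l') := Set.mem_insert_of_mem _ haE
      have hbS : b ∈ insert b (EP l') := Set.mem_insert _ _
      have hc1 : nclasses (swProd l').SameCycle (insert b (EP l'))
          = nclasses (swProd l').SameCycle (EP l') + 1 :=
        nclasses_insert_isolated (sc_equiv _) hfinE hbE hisoB
      have hk1 : nclasses (Reach l') (insert b (EP l'))
          = nclasses (Reach l') (EP l') + 1 :=
        nclasses_insert_isolated (reach_equiv _) hfinE hbE (fun y h => reach_isolated hbE h)
      have hsc : (Equiv.swap a b * swProd l').SameCycle a b :=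
        sameCycle_swap_mul_of_not (swProd l') hτ'fin hab hnsc
      obtain ⟨d, hc', hc⟩ := orbit_core (swProd l') a b hSfin haS hbS
      rw [if_neg hnsc] at hc'
      rw [if_pos hsc] at hc
      obtain ⟨d2, hk', hk⟩ := reach_core l' a b hSfin haS hbS
      rw [if_neg hnR] at hk'
      rw [if_pos hedge] at hk
      rw [Set.ncard_insert_of_notMem hbE hfinE]
      omega
    · -- a new, b old
      have h1 : insert b (EP l') = EP l' := Set.insert_eq_self.mpr hbE
      rw [h1]
      have hfix : swProd l' a = a := swProd_apply_of_not_mem haE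
      have hisoA : ∀ y, (swProd l').SameCycle a y → y = a := fun y h => sameCycle_isolated hfix h
      have hnsc : ¬(swProd l').SameCycle a b := fun h => hab (hisoA b h).symm
      have hnR : ¬Reach l' a b := fun h => hab (reach_isolated haE h).symm
      have hSfin : (insert a (EP l')).Finite := hfinE.insert a
      have haS : a ∈ insert a (EP l') := Set.mem_insert _ _
      have hbS : b ∈ insert a (EP l') := Set.mem_insert_of_mem _ hbE
      have hc1 : nclasses (swProd l').SameCycle (insert a (EP l'))
          = nclasses (swProd l').SameCycle (EP l') + 1 :=
        nclasses_insert_isolated (sc_equiv _) hfinE haE hisoA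
      have hk1 : nclasses (Reach l') (insert a (EP l'))
          = nclasses (Reach l') (EP l') + 1 :=
        nclasses_insert_isolated (reach_equiv _) hfinE haE (fun y h => reach_isolated haE h)
      have hsc : (Equiv.swap a b * swProd l').SameCycle a b :=
        sameCycle_swap_mul_of_not (swProd l') hτ'fin hab hnsc
      obtain ⟨d, hc', hc⟩ := orbit_core (swProd l') a b hSfin haS hbS
      rw [if_neg hnsc] at hc'
      rw [if_pos hsc] at hc
      obtain ⟨d2, hk', hk⟩ := reach_core l' a b hSfin haS hbS
      rw [if_neg hnR] at hk'
      rw [if_pos hedge] at hk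
      rw [Set.ncard_insert_of_notMem haE hfinE]
      omega
    · -- both new
      have hfixa : swProd l' a = a := swProd_apply_of_not_mem haE
      have hfixb : swProd l' b = b := swProd_apply_of_not_mem hbE
      have hisoA : ∀ y, (swProd l').SameCycle a y → y = a := fun y h => sameCycle_isolated hfixa h
      have hisoB : ∀ y, (swProd l').SameCycle b y → y = b := fun y h => sameCycle_isolated hfixb h
      have hnsc : ¬(swProd l').SameCycle a b := fun h => hab (hisoA b h).symm
      have hnR : ¬Reach l' a b := fun h => hab (reach_isolated haE h).symm
      have hbS' : (insert b (EP l')).Finite := hfinE.insert b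
      have haN : a ∉ insert b (EP l') := by
        simp only [Set.mem_insert_iff, not_or]
        exact ⟨hab, haE⟩
      have hSfin : (insert a (insert b (EP l'))).Finite := hbS'.insert a
      have haS : a ∈ insert a (insert b (EP l')) := Set.mem_insert _ _
      have hbS : b ∈ insert a (insert b (EP l')) :=
        Set.mem_insert_of_mem _ (Set.mem_insert _ _)
      have hc1 : nclasses (swProd l').SameCycle (insert b (EP l'))
          = nclasses (swProd l').SameCycle (EP l') + 1 :=
        nclasses_insert_isolated (sc_equiv _) hfinE hbE hisoB
      have hc2 : nclasses (swProd l').SameCycle (insert a (insert b (EP l')))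
          = nclasses (swProd l').SameCycle (insert b (EP l')) + 1 :=
        nclasses_insert_isolated (sc_equiv _) hbS' haN hisoA
      have hk1 : nclasses (Reach l') (insert b (EP l'))
          = nclasses (Reach l') (EP l') + 1 :=
        nclasses_insert_isolated (reach_equiv _) hfinE hbE (fun y h => reach_isolated hbE h)
      have hk2 : nclasses (Reach l') (insert a (insert b (EP l')))
          = nclasses (Reach l') (insert b (EP l')) + 1 :=
        nclasses_insert_isolated (reach_equiv _) hbS' haN (fun y h => reach_isolated haE h)
      have hsc : (Equiv.swap a b * swProd l').SameCycle a b :=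
        sameCycle_swap_mul_of_not (swProd l') hτ'fin hab hnsc
      obtain ⟨d, hc', hc⟩ := orbit_core (swProd l') a b hSfin haS hbS
      rw [if_neg hnsc] at hc'
      rw [if_pos hsc] at hc
      obtain ⟨d2, hk', hk⟩ := reach_core l' a b hSfin haS hbS
      rw [if_neg hnR] at hk'
      rw [if_pos hedge] at hk
      rw [Set.ncard_insert_of_notMem haN hbS', Set.ncard_insert_of_notMem hbE hfinE]
      omega

end E

section G

lemma sp_invariant {σ : Equiv.Perm ℕ} {x : ℕ} (hx : σ x ≠ x) : σ (σ x) ≠ σ x :=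
  fun h => hx (σ.injective h)

lemma zpow_inv_comm (ρ : Equiv.Perm ℕ) (i : ℤ) (x : ℕ) :
    (ρ ^ i) (ρ⁻¹ x) = ρ⁻¹ ((ρ ^ i) x) := by
  rw [← Equiv.Perm.mul_apply, ← Equiv.Perm.mul_apply, ← zpow_neg_one, ← zpow_add, ← zpow_add,
    add_comm]

lemma FACT : ∀ n : ℕ, ∀ σ : Equiv.Perm ℕ, σ.IsCycle → {x | σ x ≠ x}.Finite →
    {x | σ x ≠ x}.ncard = n →
    ∃ l : List (ℕ × ℕ), (∀ p ∈ l, p.1 ≠ p.2) ∧ swProd l = σ ∧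
      EP l = {x | σ x ≠ x} ∧ l.length + 1 = n ∧
      (∀ x ∈ {z | σ z ≠ z}, ∀ y ∈ {z | σ z ≠ z}, Reach l x y) := by
  intro n
  induction n using Nat.strong_induction_on with
  | _ n IH =>
    intro σ hcyc hf hn
    obtain ⟨a, ha, hrel⟩ := hcyc
    have hSC : ∀ x y, σ x ≠ x → σ y ≠ y → σ.SameCycle x y :=
      fun x y hx hy => (hrel hx).symm.trans (hrel hy)
    obtain ⟨b, hbdef⟩ : ∃ t, t = σ a := ⟨_, rfl⟩
    have hb : σ b ≠ b := by rw [hbdef]; exact sp_invariant ha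
    have hab : a ≠ b := fun h => ha (by rw [← hbdef, ← h])
    have hpairsub : ({a, b} : Set ℕ) ⊆ {x | σ x ≠ x} := by
      rintro x (rfl | rfl)
      · exact ha
      · exact hb
    have h2n : 2 ≤ n := by
      have := Set.ncard_le_ncard hpairsub hf
      rw [Set.ncard_pair hab, hn] at this
      exact this
    by_cases hn2 : n = 2
    · -- base case : σ is a swap
      subst hn2
      have hsp : ({a, b} : Set ℕ) = {x | σ x ≠ x} := by
        apply Set.eq_of_subset_of_ncard_le hpairsub _ hf
        rw [Set.ncard_pair hab, hn]
      have hσb : σ b = a := by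
        have hbmem : σ b ∈ ({a, b} : Set ℕ) := by
          rw [hsp]; exact sp_invariant hb
        simp only [Set.mem_insert_iff, Set.mem_singleton_iff] at hbmem
        rcases hbmem with h | h
        · exact h
        · exact absurd h hb
      have hσ : σ = Equiv.swap a b := by
        apply Equiv.ext
        intro x
        by_cases hxa : x = a
        · subst hxa; rw [Equiv.swap_apply_left, ← hbdef]
        · by_cases hxb : x = b
          · subst hxb; rw [Equiv.swap_apply_right, hσb]
          · rw [Equiv.swap_apply_of_ne_of_ne hxa hxb]
            by_contra h
            have hmem : x ∈ ({a, b} : Set ℕ) := by rw [hsp]; exact h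
            simp only [Set.mem_insert_iff, Set.mem_singleton_iff] at hmem
            rcases hmem with h' | h' <;> [exact hxa h'; exact hxb h']
      refine ⟨[(a, b)], ?_, ?_, ?_, ?_, ?_⟩
      · intro p hp
        rw [List.mem_singleton] at hp
        subst hp
        exact hab
      · rw [hσ]; simp [swProd]
      · rw [EP_cons, EP_nil, ← hsp]
        ext x
        simp [Set.mem_insert_iff]
      · rfl
      · rw [← hsp]
        rintro x (rfl | rfl) y (rfl | rfl)
        · exact Relation.ReflTransGen.refl
        · exact reach_edge (List.mem_cons_self)
        · exact reach_symm (reach_edge (List.mem_cons_self))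
        · exact Relation.ReflTransGen.refl
    · -- inductive step
      have h3n : 3 ≤ n := by omega
      have hinvb : σ⁻¹ b = a := σ.injective (by rw [← Equiv.Perm.mul_apply, mul_inv_cancel, Equiv.Perm.one_apply, hbdef])
      have hσba : σ b ≠ a := by
        intro hba
        have hinva : σ⁻¹ a = b := σ.injective (by rw [← Equiv.Perm.mul_apply, mul_inv_cancel, Equiv.Perm.one_apply, hba])
        have horb : ∀ i : ℤ, (σ ^ i) a = a ∨ (σ ^ i) a = b := by
          intro i
          induction i using Int.induction_on with
          | zero => left; simp
          | succ j ihj =>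
            have hz : (σ ^ ((j:ℤ) + 1)) a = σ ((σ ^ (j:ℤ)) a) := by
              rw [show ((j:ℤ)+1) = 1 + (j:ℤ) by ring, zpow_one_add, Equiv.Perm.mul_apply]
            rcases ihj with h | h
            · right; rw [hz, h, ← hbdef]
            · left; rw [hz, h, hba]
          | pred j ihj =>
            have hz : (σ ^ (-(j:ℤ) - 1)) a = σ⁻¹ ((σ ^ (-(j:ℤ))) a) := by
              rw [zpow_sub_one, Equiv.Perm.mul_apply, zpow_inv_comm]
            rcases ihj with h | h
            · right; rw [hz, h, hinva]
            · left; rw [hz, h, hinvb]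
        have hsub : {x | σ x ≠ x} ⊆ ({a, b} : Set ℕ) := by
          intro y hy
          obtain ⟨i, hi⟩ := hrel hy
          rcases horb i with h | h <;> rw [hi] at h
          · exact Or.inl h
          · exact Or.inr h
        have := Set.ncard_le_ncard hsub (Set.toFinite _)
        rw [hn, Set.ncard_pair hab] at this
        omega
      -- σ' = swap a b * σ
      obtain ⟨σ', hσ'⟩ : ∃ t, t = Equiv.swap a b * σ := ⟨_, rfl⟩
      have happ : ∀ z, σ' z = Equiv.swap a b (σ z) := fun z => by rw [hσ']; rfl
      have hback : σ = Equiv.swap a b * σ' := by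
        rw [hσ', ← mul_assoc, Equiv.swap_mul_self, one_mul]
      have hsp' : {x | σ' x ≠ x} = {x | σ x ≠ x} \ {a} := by
        ext x
        simp only [Set.mem_setOf_eq, Set.mem_diff, Set.mem_singleton_iff]
        constructor
        · intro hx
          by_cases hxa : x = a
          · exfalso; apply hx
            rw [happ, hxa, ← hbdef, Equiv.swap_apply_right]
          · refine ⟨?_, hxa⟩
            intro hfix
            apply hx
            rw [happ, hfix]
            have hxb : x ≠ b := by
              intro h; rw [h] at hfix; exact hb hfix
            exact Equiv.swap_apply_of_ne_of_ne hxa hxb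
        · rintro ⟨hx, hxa⟩
          rw [happ]
          intro hcon
          by_cases h1 : σ x = a
          · rw [h1, Equiv.swap_apply_left] at hcon
            rw [← hcon] at h1
            exact hσba h1
          · by_cases h2 : σ x = b
            · have := σ.injective (h2.trans hbdef)
              exact hxa this
            · rw [Equiv.swap_apply_of_ne_of_ne h1 h2] at hcon
              exact hx hcon
      have hbsp' : σ' b ≠ b := by
        have : b ∈ {x | σ' x ≠ x} := by
          rw [hsp']; exact ⟨hb, fun h => hab h.symm⟩
        exact this
      -- period of b under σ
      have hex : ∃ p, 0 < p ∧ (σ ^ p) b = b := exists_pos_period σ hf b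
      have hq0 : 0 < Nat.find hex := (Nat.find_spec hex).1
      have hqb : (σ ^ (Nat.find hex)) b = b := (Nat.find_spec hex).2
      obtain ⟨q, hq⟩ : ∃ t, t = Nat.find hex := ⟨_, rfl⟩
      rw [← hq] at hq0 hqb
      have hmin : ∀ m, 0 < m → m < q → (σ ^ m) b ≠ b := fun m hm0 hmq hmb =>
        Nat.find_min hex (hq ▸ hmq) ⟨hm0, hmb⟩
      have hq1 : (σ ^ (q - 1)) b = a := by
        apply σ.injective
        have e : σ ((σ ^ (q-1)) b) = (σ ^ q) b := by
          rw [← Equiv.Perm.mul_apply, ← pow_succ', show q-1+1 = q by omega]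
        rw [e, hqb, hbdef]
      have hmid : ∀ m, m ≤ q - 2 → (σ ^ m) b ≠ a := by
        intro m hm hma
        have hstep : (σ ^ (m + 1)) b = b := by
          rw [pow_succ', Equiv.Perm.mul_apply, hma, ← hbdef]
        by_cases hq2 : q ≤ 2
        · have hm0 : m = 0 := by omega
          rw [hm0] at hma
          simp at hma
          exact hab hma.symm
        · exact hmin (m+1) (by omega) (by omega) hstep
      have key : ∀ m, m ≤ q - 2 → (σ' ^ m) b = (σ ^ m) b := by
        intro m hm
        induction m with
        | zero => simp
        | succ j ihj =>
          have hj : j ≤ q - 2 := by omega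
          have hja : (σ ^ (j+1)) b ≠ a := hmid (j+1) hm
          have hjb : (σ ^ (j+1)) b ≠ b := hmin (j+1) (by omega) (by omega)
          calc (σ' ^ (j+1)) b = σ' ((σ' ^ j) b) := by rw [pow_succ', Equiv.Perm.mul_apply]
            _ = σ' ((σ ^ j) b) := by rw [ihj hj]
            _ = Equiv.swap a b (σ ((σ ^ j) b)) := happ _
            _ = Equiv.swap a b ((σ ^ (j+1)) b) := by rw [pow_succ', Equiv.Perm.mul_apply]
            _ = (σ ^ (j+1)) b := Equiv.swap_apply_of_ne_of_ne hja hjb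
      -- every moved point of σ is σ^m b for some m ≤ q-1
      have hcover : ∀ y, σ y ≠ y → ∃ m, m ≤ q - 1 ∧ (σ ^ m) b = y := by
        intro y hy
        obtain ⟨i, hi⟩ := hSC b y hb hy
        have hqfix : (σ ^ (q:ℤ)) b = b := by rw [zpow_natCast]; exact hqb
        have hneg : (σ ^ (-((q:ℤ) * (i.ediv q)))) b = b := by
          rw [show (-((q:ℤ) * (i.ediv q))) = (q:ℤ) * (-(i.ediv q)) by ring, zpow_mul]
          exact zpow_fixed _ hqfix _
        have hr : (σ ^ (i.emod q)) b = y := by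
          calc (σ ^ (i.emod q)) b = (σ ^ (i - (q:ℤ) * (i.ediv q))) b := by
                rw [show i.emod (q:ℤ) = i - (q:ℤ) * (i.ediv q) from Int.emod_def i q]
            _ = (σ ^ i) ((σ ^ (-((q:ℤ) * (i.ediv q)))) b) := by
                rw [sub_eq_add_neg, zpow_add, Equiv.Perm.mul_apply]
            _ = (σ ^ i) b := by rw [hneg]
            _ = y := hi
        have hlow : 0 ≤ i.emod q := Int.emod_nonneg i (by positivity)
        have hhigh : i.emod q < q := Int.emod_lt_of_pos i (by exact_mod_cast hq0)
        refine ⟨(i.emod q).toNat, by omega, ?_⟩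
        rw [← zpow_natCast, Int.toNat_of_nonneg hlow]
        exact hr
      have hcyc' : σ'.IsCycle := by
        refine ⟨b, hbsp', ?_⟩
        intro y hy
        have hy2 : σ y ≠ y ∧ y ≠ a := by
          have hmem : y ∈ {x | σ' x ≠ x} := hy
          rw [hsp'] at hmem
          exact hmem
        obtain ⟨m, hm, hmb⟩ := hcover y hy2.1
        have hmq : m ≠ q - 1 := by
          intro h
          rw [h, hq1] at hmb
          exact hy2.2 hmb.symm
        have hm2 : m ≤ q - 2 := by omega
        exact ⟨m, by rw [zpow_natCast, key m hm2]; exact hmb⟩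
      have hf' : {x | σ' x ≠ x}.Finite := by rw [hsp']; exact hf.diff
      have hn' : {x | σ' x ≠ x}.ncard = n - 1 := by
        rw [hsp', Set.ncard_diff_singleton_of_mem (show a ∈ {x | σ x ≠ x} from ha), hn]
      obtain ⟨l', hl'pairs, hl'prod, hl'EP, hl'len, hl'reach⟩ :=
        IH (n-1) (by omega) σ' hcyc' hf' hn'
      refine ⟨(a, b) :: l', ?_, ?_, ?_, ?_, ?_⟩
      · intro p hp
        rcases List.mem_cons.1 hp with rfl | hp'
        · exact hab
        · exact hl'pairs p hp'
      · rw [swProd_cons, hl'prod, ← hback]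
      · rw [EP_cons, hl'EP, hsp']
        have hbmem : b ∈ {x | σ x ≠ x} \ {a} := ⟨hb, fun h => hab h.symm⟩
        rw [Set.insert_eq_self.mpr hbmem, Set.insert_diff_singleton,
          Set.insert_eq_self.mpr (show a ∈ {x | σ x ≠ x} from ha)]
      · rw [List.length_cons]; omega
      · have hW : ∀ x ∈ {z | σ z ≠ z}, Reach ((a, b) :: l') a x := by
          intro x hx
          by_cases hxa : x = a
          · subst hxa; exact Relation.ReflTransGen.refl
          · have hx' : x ∈ {z | σ' z ≠ z} := by rw [hsp']; exact ⟨hx, hxa⟩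
            have hb' : b ∈ {z | σ' z ≠ z} := hbsp'
            have := hl'reach b hb' x hx'
            exact (reach_edge (List.mem_cons_self)).trans
              (reach_mono (fun p hp => List.mem_cons_of_mem _ hp) this)
        intro x hx y hy
        exact (reach_symm (hW x hx)).trans (hW y hy)

end G

/-- The Cayley distance of a (finitely supported) permutation of `ℕ`: the minimal number
of transpositions whose product is `τ`. -/
noncomputable def cayleyDist (τ : Equiv.Perm ℕ) : ℕ :=
  sInf {m | ∃ l : List (Equiv.Perm ℕ), l.length = m ∧
    (∀ g ∈ l, ∃ a b, a ≠ b ∧ g = Equiv.swap a b) ∧ l.prod = τ}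

section F

lemma nclasses_of_all_isolated {R : ℕ → ℕ → Prop} (hR : Equivalence R) {S : Set ℕ}
    (hiso : ∀ x, ∀ y, R x y → y = x) : nclasses R S = S.ncard := by
  rw [nclasses]
  apply Set.ncard_image_of_injOn
  intro x _ y _ h
  exact (hiso x y (rel_of_cls_eq hR h)).symm

lemma step_insert (τ : Equiv.Perm ℕ) {S : Set ℕ} (hτ : {z | τ z ≠ z} ⊆ S)
    (hS : S.Finite) (x : ℕ) :
    (insert x S).ncard + nclasses τ.SameCycle S
      = S.ncard + nclasses τ.SameCycle (insert x S) := by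
  by_cases hx : x ∈ S
  · rw [Set.insert_eq_self.mpr hx]
  · have hfix : τ x = x := by
      by_contra h
      exact hx (hτ h)
    rw [Set.ncard_insert_of_notMem hx hS,
      nclasses_insert_isolated (sc_equiv τ) hS hx (fun y h => sameCycle_isolated hfix h)]
    omega

lemma LB' : ∀ (L : List (Equiv.Perm ℕ)), (∀ g ∈ L, ∃ a b, a ≠ b ∧ g = Equiv.swap a b) →
    ∀ S : Set ℕ, S.Finite → {z | L.prod z ≠ z} ⊆ S →
    S.ncard ≤ L.length + nclasses L.prod.SameCycle S := by
  intro L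
  induction L with
  | nil =>
    intro _ S hS hsp
    rw [List.prod_nil, List.length_nil, zero_add]
    rw [nclasses_of_all_isolated (sc_equiv 1) (fun x y h => sameCycle_isolated rfl h)]
  | cons g L' IH =>
    intro hsw S hS hsp
    obtain ⟨a, b, hab, rfl⟩ := hsw g (List.mem_cons_self)
    rw [List.prod_cons] at hsp ⊢
    have hsp' : {z | L'.prod z ≠ z} ⊆ insert a (insert b S) := by
      intro x hx
      by_contra hxS
      simp only [Set.mem_insert_iff, not_or] at hxS
      obtain ⟨hxa, hxb, hxS⟩ := hxS
      have hfix : (Equiv.swap a b * L'.prod) x = x := by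
        by_contra h
        exact hxS (hsp h)
      rw [Equiv.Perm.mul_apply] at hfix
      by_cases h1 : L'.prod x = a
      · rw [h1, Equiv.swap_apply_left] at hfix; exact hxb hfix.symm
      · by_cases h2 : L'.prod x = b
        · rw [h2, Equiv.swap_apply_right] at hfix; exact hxa hfix.symm
        · rw [Equiv.swap_apply_of_ne_of_ne h1 h2] at hfix; exact hx hfix
    have hS'' : (insert b S).Finite := hS.insert b
    have hS' : (insert a (insert b S)).Finite := hS''.insert a
    have IH' := IH (fun g hg => hsw g (List.mem_cons_of_mem _ hg)) _ hS' hsp'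
    obtain ⟨d, hc', hc⟩ := orbit_core L'.prod a b hS' (Set.mem_insert _ _)
      (Set.mem_insert_of_mem _ (Set.mem_insert _ _))
    have e1 : 1 ≤ (@ite ℕ (L'.prod.SameCycle a b) (Classical.propDecidable _) 1 2) ∧
        (@ite ℕ (L'.prod.SameCycle a b) (Classical.propDecidable _) 1 2) ≤ 2 := by
      split <;> omega
    have e2 : 1 ≤ (@ite ℕ ((Equiv.swap a b * L'.prod).SameCycle a b)
          (Classical.propDecidable _) 1 2) ∧
        (@ite ℕ ((Equiv.swap a b * L'.prod).SameCycle a b)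
          (Classical.propDecidable _) 1 2) ≤ 2 := by
      split <;> omega
    have hsp2 : {z | (Equiv.swap a b * L'.prod) z ≠ z} ⊆ insert b S :=
      fun z hz => Set.mem_insert_of_mem _ (hsp hz)
    have h1 := step_insert (Equiv.swap a b * L'.prod) hsp hS b
    have h2 := step_insert (Equiv.swap a b * L'.prod) hsp2 hS'' a
    rw [List.length_cons]
    omega

lemma cayley_lb (τ : Equiv.Perm ℕ)
    (hne : ∃ l0 : List (Equiv.Perm ℕ), (∀ g ∈ l0, ∃ a b, a ≠ b ∧ g = Equiv.swap a b) ∧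
      l0.prod = τ)
    {S : Set ℕ} (hS : S.Finite) (hsp : {z | τ z ≠ z} ⊆ S) :
    S.ncard ≤ cayleyDist τ + nclasses τ.SameCycle S := by
  obtain ⟨l0, hl0, hp0⟩ := hne
  have hmem : cayleyDist τ ∈ {m | ∃ l : List (Equiv.Perm ℕ), l.length = m ∧
      (∀ g ∈ l, ∃ a b, a ≠ b ∧ g = Equiv.swap a b) ∧ l.prod = τ} :=
    Nat.sInf_mem ⟨l0.length, l0, rfl, hl0, hp0⟩
  obtain ⟨l, hlen, hsw, hprod⟩ := hmem
  have := LB' l hsw S hS (by rw [hprod]; exact hsp)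
  rw [hprod, hlen] at this
  exact this

end F

/-- The intersection graph of a family of permutations: `j` and `j'` are adjacent
whenever the supports of `σ j` and `σ j'` intersect. -/
def intersectGraph {r : ℕ} (σ : Fin r → Equiv.Perm ℕ) : SimpleGraph (Fin r) :=
  SimpleGraph.fromRel fun j j' => ({x | σ j x ≠ x} ∩ {x | σ j' x ≠ x}).Nonempty

section H

lemma swProd_append (l₁ l₂ : List (ℕ × ℕ)) :
    swProd (l₁ ++ l₂) = swProd l₁ * swProd l₂ := by
  simp [swProd]

lemma swProd_flatten : ∀ ls : List (List (ℕ × ℕ)),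
    swProd ls.flatten = (ls.map swProd).prod := by
  intro ls
  induction ls with
  | nil => simp [swProd]
  | cons a ls ih => rw [List.flatten_cons, swProd_append, List.map_cons, List.prod_cons, ih]

lemma EP_append (l₁ l₂ : List (ℕ × ℕ)) : EP (l₁ ++ l₂) = EP l₁ ∪ EP l₂ := by
  ext x
  simp only [EP, Set.mem_setOf_eq, List.mem_append, Set.mem_union]
  constructor
  · rintro ⟨p, (h | h), hc⟩
    · exact Or.inl ⟨p, h, hc⟩
    · exact Or.inr ⟨p, h, hc⟩
  · rintro (⟨p, h, hc⟩ | ⟨p, h, hc⟩)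
    · exact ⟨p, Or.inl h, hc⟩
    · exact ⟨p, Or.inr h, hc⟩

lemma mem_EP_flatten {x : ℕ} : ∀ {ls : List (List (ℕ × ℕ))},
    (x ∈ EP ls.flatten ↔ ∃ l' ∈ ls, x ∈ EP l') := by
  intro ls
  induction ls with
  | nil => simp [EP_nil, List.flatten_nil]
  | cons a ls ih =>
    rw [List.flatten_cons, EP_append]
    simp only [Set.mem_union, ih, List.mem_cons]
    constructor
    · rintro (h | ⟨l', hl', hx⟩)
      · exact ⟨a, Or.inl rfl, h⟩
      · exact ⟨l', Or.inr hl', hx⟩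
    · rintro ⟨l', (rfl | hl'), hx⟩
      · exact Or.inl hx
      · exact Or.inr ⟨l', hl', hx⟩

/-- For jointly intersecting cycles `σ₁,…,σ_r` of lengths `k₁,…,k_r ≥ 2`,
`2·|supp(σ₁) ∪ ⋯ ∪ supp(σ_r)| ≤ |σ₁⋯σ_r| − r + (k₁+⋯+k_r) + 2`. -/
theorem stmt5 (r : ℕ) (hr : 1 ≤ r) (σ : Fin r → Equiv.Perm ℕ) (k : Fin r → ℕ)
    (hk : ∀ j, 2 ≤ k j) (hcyc : ∀ j, (σ j).IsCycle)
    (hfin : ∀ j, {x | σ j x ≠ x}.Finite)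
    (hsupp : ∀ j, Set.ncard {x | σ j x ≠ x} = k j)
    (hconn : (intersectGraph σ).Connected) :
    2 * (Set.ncard (⋃ j, {x | σ j x ≠ x}) : ℤ) ≤
      (cayleyDist (List.ofFn σ).prod : ℤ) - (r : ℤ) + (∑ j, (k j : ℤ)) + 2 := by
  have H := fun j => FACT (k j) (σ j) (hcyc j) (hfin j) (hsupp j)
  choose l hpairs hprod hEP hlen hreach using H
  obtain ⟨L, hLdef⟩ : ∃ t, t = (List.ofFn l).flatten := ⟨_, rfl⟩
  have hmemL : ∀ j, ∀ p ∈ l j, p ∈ L := by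
    intro j p hp
    rw [hLdef]
    exact List.mem_flatten.2 ⟨l j, (List.mem_ofFn' _ _).2 ⟨j, rfl⟩, hp⟩
  have hpairsL : ∀ p ∈ L, p.1 ≠ p.2 := by
    intro p hp
    rw [hLdef] at hp
    obtain ⟨lj, hlj, hp2⟩ := List.mem_flatten.1 hp
    obtain ⟨j, rfl⟩ := (List.mem_ofFn' _ _).1 hlj
    exact hpairs j p hp2
  have hprodL : swProd L = (List.ofFn σ).prod := by
    rw [hLdef, swProd_flatten, List.map_ofFn]
    have he : swProd ∘ l = σ := funext hprod
    rw [he]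
  have hEPL : EP L = ⋃ j, {x | σ j x ≠ x} := by
    ext x
    rw [hLdef, mem_EP_flatten, Set.mem_iUnion]
    constructor
    · rintro ⟨l', hl', hx⟩
      obtain ⟨j, rfl⟩ := (List.mem_ofFn' _ _).1 hl'
      exact ⟨j, (hEP j) ▸ hx⟩
    · rintro ⟨j, hx⟩
      exact ⟨l j, (List.mem_ofFn' _ _).2 ⟨j, rfl⟩, (hEP j) ▸ hx⟩
  have hlenL : L.length = ∑ j, (l j).length := by
    rw [hLdef, List.length_flatten, List.map_ofFn]
    exact List.sum_ofFn
  -- connectivity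
  have within : ∀ j, ∀ x ∈ {z | σ j z ≠ z}, ∀ y ∈ {z | σ j z ≠ z}, Reach L x y :=
    fun j x hx y hy => reach_mono (hmemL j) (hreach j x hx y hy)
  have hwalk : ∀ (j j' : Fin r) (_ : (intersectGraph σ).Walk j j'),
      ∀ x ∈ {z | σ j z ≠ z}, ∀ y ∈ {z | σ j' z ≠ z}, Reach L x y := by
    intro j j' w
    induction w with
    | nil => exact within _
    | @cons u v w' hadj w ih =>
      intro x hx y hy
      rw [intersectGraph, SimpleGraph.fromRel_adj] at hadj
      obtain ⟨hne, hcases⟩ := hadj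
      have hz : ∃ z, z ∈ {z | σ u z ≠ z} ∧ z ∈ {z | σ v z ≠ z} := by
        rcases hcases with ⟨z, hz1, hz2⟩ | ⟨z, hz1, hz2⟩
        · exact ⟨z, hz1, hz2⟩
        · exact ⟨z, hz2, hz1⟩
      obtain ⟨z, hz1, hz2⟩ := hz
      exact (within u x hx z hz1).trans (ih z hz2 y hy)
  have hconnL : ∀ x ∈ EP L, ∀ y ∈ EP L, Reach L x y := by
    intro x hx y hy
    rw [hEPL] at hx hy
    obtain ⟨j, hx⟩ := Set.mem_iUnion.1 hx
    obtain ⟨j', hy⟩ := Set.mem_iUnion.1 hy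
    obtain ⟨w⟩ := hconn.preconnected j j'
    exact hwalk j j' w x hx y hy
  have hcomp : nclasses (Reach L) (EP L) ≤ 1 :=
    nclasses_le_one (reach_equiv L) (EP_finite L) hconnL
  have hA := claimA L hpairsL
  have hcayley := cayley_lb ((List.ofFn σ).prod)
    ⟨L.map (fun p => Equiv.swap p.1 p.2),
      fun g hg => by
        obtain ⟨p, hp, rfl⟩ := List.mem_map.1 hg
        exact ⟨p.1, p.2, hpairsL p hp, rfl⟩,
      by exact hprodL⟩
    (EP_finite L) (by rw [← hprodL]; exact sp_swProd_subset L)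
  rw [hprodL] at hA
  have h3 : 2 * (EP L).ncard ≤ cayleyDist ((List.ofFn σ).prod) + L.length + 2 := by omega
  rw [← hEPL]
  have hki : ∀ j, ((l j).length : ℤ) = (k j : ℤ) - 1 := by
    intro j
    have := hlen j
    omega
  have hmz : (L.length : ℤ) = (∑ j, (k j : ℤ)) - r := by
    calc (L.length : ℤ) = ∑ j, ((l j).length : ℤ) := by rw [hlenL]; push_cast; rfl
      _ = ∑ j, ((k j : ℤ) - 1) := Finset.sum_congr rfl (fun j _ => hki j)
      _ = (∑ j, (k j : ℤ)) - r := by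
          rw [Finset.sum_sub_distrib, Finset.sum_const, Finset.card_univ, Fintype.card_fin]
          simp
  have h3' : 2 * ((EP L).ncard : ℤ)
      ≤ (cayleyDist ((List.ofFn σ).prod) : ℤ) + (L.length : ℤ) + 2 := by
    exact_mod_cast h3
  linarith

end H
end

section
/- Fix n ≥ 0, k ≥ 1, and a set Ω with n+1 elements having a distinguished element p. In the group algebra ℝ[S_Ω] of the symmetric group of Ω, let X := Σ_{j ∈ Ω, j ≠ p} (j p) (the Jucys–Murphy element), let E : ℝ[S_Ω] → ℝ[S_Ω] be the linear map with E(g) = g if g(p) = p and E(g) = 0 otherwise (for group elements g), and define D_k := (n+1)^{−1} Σ over tuples (i_1,…,i_k) ∈ Ω^k with i_1 ≠ i_2, i_2 ≠ i_3, …, i_{k−1} ≠ i_k, and i_k ≠ i_1, of the product t(i_1,i_2)·t(i_2,i_3)⋯t(i_{k−1},i_k)·t(i_k,i_1), where t(a,b) is the transposition (a b) when a ≠ p and b ≠ p, and t(a,b) is the identity when a = p or b = p. Then D_k = E(X^k). -/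
open Finset

section Aux

variable {Ω : Type*} [Fintype Ω] [DecidableEq Ω]

local notation "A" => MonoidAlgebra ℝ (Equiv.Perm Ω)
local notation "oof" => MonoidAlgebra.of ℝ (Equiv.Perm Ω)

/-- `t(a,b)`: the transposition `(a b)` unless `a = p` or `b = p`. -/
def ttp (p a b : Ω) : Equiv.Perm Ω :=
  if a = p ∨ b = p then 1 else Equiv.swap a b

omit [Fintype Ω] in
lemma ttp_fix_p (p a b : Ω) : (ttp p a b) p = p := by
  unfold ttp
  split
  · rfl
  · next h =>
    push_neg at h
    exact Equiv.swap_apply_of_ne_of_ne (Ne.symm h.1) (Ne.symm h.2)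

/-- The Jucys–Murphy element. -/
noncomputable def JM (p : Ω) : MonoidAlgebra ℝ (Equiv.Perm Ω) :=
  ∑ j ∈ Finset.univ.filter fun j : Ω => j ≠ p, MonoidAlgebra.of ℝ (Equiv.Perm Ω) (Equiv.swap j p)

/-- Filtering a group algebra element to permutations sending `u` to `v`. -/
noncomputable def Efil (u v : Ω) :
    MonoidAlgebra ℝ (Equiv.Perm Ω) →ₗ[ℝ] MonoidAlgebra ℝ (Equiv.Perm Ω) where
  toFun x := MonoidAlgebra.ofCoeff (Finsupp.filter (fun g : Equiv.Perm Ω => g u = v) x.coeff)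
  map_add' _ _ := congrArg MonoidAlgebra.ofCoeff Finsupp.filter_add
  map_smul' _ _ := congrArg MonoidAlgebra.ofCoeff Finsupp.filter_smul

omit [Fintype Ω] in
lemma Efil_of (u v : Ω) (g : Equiv.Perm Ω) :
    Efil u v (oof g) = if g u = v then (oof g : A) else 0 := by
  show MonoidAlgebra.ofCoeff
    (Finsupp.filter (fun g : Equiv.Perm Ω => g u = v) (Finsupp.single g (1:ℝ))) = _
  by_cases h : g u = v
  · rw [if_pos h]
    exact congrArg MonoidAlgebra.ofCoeff (Finsupp.filter_single_of_pos _ h)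
  · rw [if_neg h]
    exact congrArg MonoidAlgebra.ofCoeff (Finsupp.filter_single_of_neg _ h)

omit [Fintype Ω] in
lemma of_mul_Efil (u v : Ω) (w : Equiv.Perm Ω) (x : MonoidAlgebra ℝ (Equiv.Perm Ω)) :
    Efil u (w v) (oof w * x) = oof w * Efil u v x := by
  induction x using MonoidAlgebra.induction_on with
  | of g =>
      rw [← map_mul, Efil_of, Efil_of]
      have h2 : (w * g) u = w v ↔ g u = v := by
        rw [Equiv.Perm.mul_apply]
        exact w.injective.eq_iff
      by_cases hc : g u = v
      · rw [if_pos (h2.mpr hc), if_pos hc, map_mul]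
      · rw [if_neg (fun hh => hc (h2.mp hh)), if_neg hc, mul_zero]
  | add f g hf hg => rw [mul_add, map_add, hf, hg, map_add, mul_add]
  | smul r f hf => rw [mul_smul_comm, map_smul, hf, map_smul, mul_smul_comm]

omit [Fintype Ω] in
lemma Efil_mul_of (u v : Ω) (h : Equiv.Perm Ω) (hu : h u = u)
    (x : MonoidAlgebra ℝ (Equiv.Perm Ω)) :
    Efil u v (x * oof h) = Efil u v x * oof h := by
  induction x using MonoidAlgebra.induction_on with
  | of g =>
      rw [← map_mul, Efil_of, Efil_of]
      have h2 : (g * h) u = g u := by rw [Equiv.Perm.mul_apply, hu]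
      by_cases hc : g u = v
      · rw [if_pos (h2.trans hc), if_pos hc, map_mul]
      · rw [if_neg (fun hh => hc (h2.symm.trans hh)), if_neg hc, zero_mul]
  | add f g hf hg => rw [add_mul, map_add, hf, hg, map_add, add_mul]
  | smul r f hf => rw [smul_mul_assoc, map_smul, hf, map_smul, smul_mul_assoc]

/-- Conjugation by a `p`-fixing permutation commutes with the JM element. -/
lemma commute_of_JM (p : Ω) (s : Equiv.Perm Ω) (hs : s p = p) :
    Commute (oof s : A) (JM p) := by
  rw [Commute, SemiconjBy]
  unfold JM
  calc (oof s : A) * ∑ j ∈ Finset.univ.filter fun j : Ω => j ≠ p, oof (Equiv.swap j p)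
      = ∑ j ∈ Finset.univ.filter fun j : Ω => j ≠ p, oof (s * Equiv.swap j p) := by
        rw [Finset.mul_sum]; exact Finset.sum_congr rfl fun j _ => (map_mul _ _ _).symm
    _ = ∑ j ∈ Finset.univ.filter fun j : Ω => j ≠ p, oof (Equiv.swap (s j) p * s) := by
        refine Finset.sum_congr rfl fun j _ => ?_
        rw [Equiv.mul_swap_eq_swap_mul, hs]
    _ = ∑ j ∈ Finset.univ.filter fun j : Ω => j ≠ p, oof (Equiv.swap j p * s) := by
        refine Finset.sum_nbij' (fun j => s j) (fun j => s⁻¹ j) ?_ ?_ ?_ ?_ ?_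
        · intro a ha
          simp only [Finset.mem_filter, Finset.mem_univ, true_and] at ha ⊢
          intro h; exact ha (s.injective (by rw [h, hs]))
        · intro a ha
          simp only [Finset.mem_filter, Finset.mem_univ, true_and] at ha ⊢
          intro h; apply ha; rw [← hs, ← h]; simp
        · intro a _; simp
        · intro a _; simp
        · intro a _; rfl
    _ = (∑ j ∈ Finset.univ.filter fun j : Ω => j ≠ p, oof (Equiv.swap j p)) * oof s := by
        rw [Finset.sum_mul]; exact Finset.sum_congr rfl fun j _ => map_mul _ _ _

omit [Fintype Ω] in
lemma swap_mul_swap_eq (p b c : Ω) (hb : b ≠ p) (hc : c ≠ p) (hcb : c ≠ b) :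
    Equiv.swap c p * Equiv.swap c b = Equiv.swap b p * Equiv.swap c p := by
  ext z
  simp only [Equiv.Perm.mul_apply, Equiv.swap_apply_def]
  split_ifs <;> simp_all

/-- The key identity. -/
lemma key_identity (p : Ω) (k : ℕ) (b : Ω) :
    ∑ c ∈ Finset.univ.filter fun c : Ω => c ≠ b,
      oof (Equiv.swap c p) * (JM p) ^ k * oof (ttp p c b)
      = oof (Equiv.swap b p) * (JM p) ^ k * JM p := by
  have hXk : ∀ s : Equiv.Perm Ω, s p = p →
      (oof s : A) * (JM p) ^ k = (JM p) ^ k * oof s := fun s hs =>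
    ((commute_of_JM p s hs).pow_right k).eq
  by_cases hb : b = p
  · rw [hb]
    calc ∑ c ∈ Finset.univ.filter fun c : Ω => c ≠ p,
          oof (Equiv.swap c p) * (JM p) ^ k * oof (ttp p c p)
        = ∑ c ∈ Finset.univ.filter fun c : Ω => c ≠ p,
            oof (Equiv.swap c p) * (JM p) ^ k := by
          refine Finset.sum_congr rfl fun c _ => ?_
          rw [show ttp p c p = 1 by unfold ttp; rw [if_pos (Or.inr rfl)], map_one, mul_one]
      _ = JM p * (JM p) ^ k := by rw [← Finset.sum_mul]; rfl
      _ = (JM p) ^ k * JM p := ((Commute.refl (JM p)).pow_right k).eq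
      _ = oof (Equiv.swap p p) * (JM p) ^ k * JM p := by
          rw [Equiv.swap_self]
          rw [show (Equiv.refl Ω : Equiv.Perm Ω) = 1 from rfl, map_one, one_mul]
  · have hpmem : p ∈ Finset.univ.filter fun c : Ω => c ≠ b := by
      simp [Ne.symm hb]
    rw [← Finset.add_sum_erase _ _ hpmem]
    have hterm_p : (oof (Equiv.swap p p) : A) * (JM p) ^ k * oof (ttp p p b) = (JM p) ^ k := by
      rw [Equiv.swap_self, show ttp p p b = 1 by unfold ttp; rw [if_pos (Or.inl rfl)]]
      rw [show (Equiv.refl Ω : Equiv.Perm Ω) = 1 from rfl, map_one, one_mul, mul_one]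
    rw [hterm_p]
    have hterm : ∀ c ∈ (Finset.univ.filter fun c : Ω => c ≠ b).erase p,
        (oof (Equiv.swap c p) : A) * (JM p) ^ k * oof (ttp p c b)
        = oof (Equiv.swap b p) * oof (Equiv.swap c p) * (JM p) ^ k := by
      intro c hcmem
      have hcp : c ≠ p := Finset.ne_of_mem_erase hcmem
      have hcb : c ≠ b := by
        have := Finset.mem_of_mem_erase hcmem
        simp only [Finset.mem_filter, Finset.mem_univ, true_and] at this
        exact this
      have httc : ttp p c b = Equiv.swap c b := by
        unfold ttp; rw [if_neg (by push_neg; exact ⟨hcp, hb⟩)]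
      have hswfix : (Equiv.swap c b) p = p :=
        Equiv.swap_apply_of_ne_of_ne (Ne.symm hcp) (Ne.symm hb)
      rw [httc, mul_assoc, ← hXk _ hswfix, ← mul_assoc, ← map_mul,
        swap_mul_swap_eq p b c hb hcp hcb, map_mul]
    rw [Finset.sum_congr rfl hterm]
    have hset : (Finset.univ.filter fun c : Ω => c ≠ b).erase p
        = (Finset.univ.filter fun c : Ω => c ≠ p).erase b := by
      ext z
      simp only [Finset.mem_erase, Finset.mem_filter, Finset.mem_univ, true_and]
      tauto
    have hsum : ∑ c ∈ (Finset.univ.filter fun c : Ω => c ≠ b).erase p,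
        (oof (Equiv.swap b p) : A) * oof (Equiv.swap c p) * (JM p) ^ k
        = oof (Equiv.swap b p) * (JM p - oof (Equiv.swap b p)) * (JM p) ^ k := by
      rw [← Finset.sum_mul, ← Finset.mul_sum]
      congr 2
      rw [hset]
      rw [Finset.sum_erase_eq_sub (by simp [hb])]
      rfl
    rw [hsum, mul_sub, sub_mul, ← map_mul, Equiv.swap_mul_self, map_one, one_mul,
      add_sub_cancel, mul_assoc,
      show JM p * (JM p) ^ k = (JM p) ^ k * JM p from ((Commute.refl (JM p)).pow_right k).eq,
      ← mul_assoc]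

/-- Sum over walks with `k` edges from `a` to `b`. -/
noncomputable def WS (p : Ω) (k : ℕ) (a b : Ω) : MonoidAlgebra ℝ (Equiv.Perm Ω) :=
  ∑ w ∈ Finset.univ.filter (fun w : Fin (k+1) → Ω =>
      w 0 = a ∧ w (Fin.last k) = b ∧ ∀ m : Fin k, w m.castSucc ≠ w m.succ),
    MonoidAlgebra.of ℝ (Equiv.Perm Ω)
      ((List.ofFn fun m : Fin k => ttp p (w m.castSucc) (w m.succ)).prod)

lemma WS_zero (p a b : Ω) :
    WS p 0 a b = if a = b then 1 else 0 := by
  unfold WS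
  by_cases hab : a = b
  · subst hab
    rw [if_pos rfl]
    have hset : (Finset.univ.filter (fun w : Fin 1 → Ω =>
        w 0 = a ∧ w (Fin.last 0) = a ∧ ∀ m : Fin 0, w m.castSucc ≠ w m.succ))
        = {fun _ : Fin 1 => a} := by
      ext w
      simp only [Finset.mem_filter, Finset.mem_univ, true_and, Finset.mem_singleton]
      constructor
      · rintro ⟨h1, -, -⟩
        funext m
        rw [Subsingleton.elim m 0, h1]
      · rintro rfl
        exact ⟨rfl, rfl, fun m => m.elim0⟩
    rw [hset, Finset.sum_singleton]
    simp [List.ofFn_zero, MonoidAlgebra.one_def]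
  · rw [if_neg hab]
    apply Finset.sum_eq_zero
    intro w hw
    simp only [Finset.mem_filter, Finset.mem_univ, true_and] at hw
    exfalso
    obtain ⟨h1, h2, -⟩ := hw
    exact hab (by rw [← h1, ← h2]; exact congrArg w (Fin.ext (by simp)))

lemma WS_succ (p : Ω) (k : ℕ) (a b : Ω) :
    WS p (k+1) a b = ∑ c ∈ Finset.univ.filter fun c : Ω => c ≠ b,
      WS p k a c * MonoidAlgebra.of ℝ (Equiv.Perm Ω) (ttp p c b) := by
  have h2 : (∑ x ∈ (Finset.univ.filter fun c : Ω => c ≠ b).sigma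
            (fun c => Finset.univ.filter (fun w : Fin (k+1) → Ω =>
              w 0 = a ∧ w (Fin.last k) = c ∧ ∀ m : Fin k, w m.castSucc ≠ w m.succ)),
          (oof ((List.ofFn fun m : Fin k => ttp p (x.2 m.castSucc) (x.2 m.succ)).prod) : A)
            * oof (ttp p x.1 b))
      = ∑ c ∈ Finset.univ.filter fun c : Ω => c ≠ b,
        WS p k a c * (oof (ttp p c b) : A) := by
    rw [Finset.sum_sigma]
    refine Finset.sum_congr rfl fun c _ => ?_
    rw [WS, Finset.sum_mul]
  rw [← h2]
  unfold WS
  refine Finset.sum_nbij'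
    (fun w => (⟨w (Fin.last k).castSucc, Fin.init w⟩ : Σ _ : Ω, (Fin (k+1) → Ω)))
    (fun x => Fin.snoc x.2 b) ?_ ?_ ?_ ?_ ?_
  · intro w hw
    simp only [Finset.mem_filter, Finset.mem_univ, true_and] at hw
    obtain ⟨h0, hlast, hchain⟩ := hw
    have hlast' : w (Fin.last k).succ = b := by rw [Fin.succ_last]; exact hlast
    refine Finset.mem_sigma.mpr ⟨?_, ?_⟩
    · simp only [Finset.mem_filter, Finset.mem_univ, true_and]
      rw [← hlast']
      exact hchain (Fin.last k)
    · simp only [Finset.mem_filter, Finset.mem_univ, true_and]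
      refine ⟨?_, rfl, ?_⟩
      · show Fin.init w 0 = a
        show w (Fin.castSucc 0) = a
        rw [Fin.castSucc_zero]; exact h0
      · intro m
        show w m.castSucc.castSucc ≠ w m.succ.castSucc
        rw [← Fin.succ_castSucc]
        exact hchain m.castSucc
  · rintro ⟨c, w'⟩ hx
    rw [Finset.mem_sigma] at hx
    obtain ⟨hc, hw'⟩ := hx
    simp only [Finset.mem_filter, Finset.mem_univ, true_and] at hc hw'
    obtain ⟨h0, hlast, hchain⟩ := hw'
    simp only [Finset.mem_filter, Finset.mem_univ, true_and]
    refine ⟨?_, Fin.snoc_last _ _, ?_⟩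
    · show (Fin.snoc w' b : Fin (k+2) → Ω) 0 = a
      rw [show (0 : Fin (k+2)) = Fin.castSucc 0 from (Fin.castSucc_zero).symm,
        Fin.snoc_castSucc]
      exact h0
    · intro m
      refine Fin.lastCases ?_ ?_ m
      · rw [Fin.succ_last, Fin.snoc_last, Fin.snoc_castSucc, hlast]
        exact hc
      · intro j
        rw [Fin.succ_castSucc, Fin.snoc_castSucc, Fin.snoc_castSucc]
        exact hchain j
  · intro w hw
    simp only [Finset.mem_filter, Finset.mem_univ, true_and] at hw
    show Fin.snoc (Fin.init w) b = w
    rw [← hw.2.1]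
    exact Fin.snoc_init_self w
  · rintro ⟨c, w'⟩ hx
    rw [Finset.mem_sigma] at hx
    obtain ⟨-, hw'⟩ := hx
    simp only [Finset.mem_filter, Finset.mem_univ, true_and] at hw'
    have hfst : (Fin.snoc w' b : Fin (k+2) → Ω) (Fin.last k).castSucc = c := by
      rw [Fin.snoc_castSucc]; exact hw'.2.1
    have hsnd : Fin.init (Fin.snoc w' b : Fin (k+2) → Ω) = w' := by simp
    exact Sigma.ext hfst (heq_of_eq hsnd)
  · intro w hw
    simp only [Finset.mem_filter, Finset.mem_univ, true_and] at hw
    obtain ⟨h0, hlast, hchain⟩ := hw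
    rw [← map_mul]
    congr 1
    rw [List.ofFn_succ' (fun m : Fin (k+1) => ttp p (w m.castSucc) (w m.succ)),
      List.concat_eq_append, List.prod_append, List.prod_cons, List.prod_nil, mul_one]
    have hlast2 : w (Fin.last k).succ = b := by rw [Fin.succ_last]; exact hlast
    refine congrArg₂ (· * ·) ?_ ?_
    · refine congrArg List.prod (congrArg List.ofFn (funext fun m => ?_))
      show ttp p (w m.castSucc.castSucc) (w m.castSucc.succ)
        = ttp p (Fin.init w m.castSucc) (Fin.init w m.succ)
      rw [Fin.succ_castSucc]
      rfl
    · show ttp p (w (Fin.last k).castSucc) (w (Fin.last k).succ)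
        = ttp p (w (Fin.last k).castSucc) b
      rw [hlast2]

/-- Master formula: walk sums equal conjugated filtered JM powers. -/
lemma WS_eq (p : Ω) (k : ℕ) (a b : Ω) :
    WS p k a b = oof (Equiv.swap a p)
      * (oof (Equiv.swap b p) * Efil p (Equiv.swap b p a) ((JM p) ^ k)) := by
  induction k generalizing b with
  | zero =>
      rw [WS_zero, pow_zero]
      have h1 : (1 : A) = oof 1 := (map_one _).symm
      rw [h1, Efil_of]
      have h2 : (1 : Equiv.Perm Ω) p = p := rfl
      by_cases hab : a = b
      · subst hab
        rw [if_pos rfl, if_pos (by rw [h2, Equiv.swap_apply_left])]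
        rw [← map_mul, ← map_mul, mul_one, Equiv.swap_mul_self, map_one]
      · rw [if_neg hab, if_neg ?_, mul_zero, mul_zero]
        rw [h2]
        intro hcon
        exact hab (((Equiv.swap b p).injective
          ((Equiv.swap_apply_left b p).trans hcon)).symm)
  | succ k ih =>
      rw [WS_succ]
      have hstep : ∀ c ∈ Finset.univ.filter fun c : Ω => c ≠ b,
          WS p k a c * oof (ttp p c b)
          = oof (Equiv.swap a p) *
            Efil p a (oof (Equiv.swap c p) * (JM p) ^ k * oof (ttp p c b)) := by
        intro c _
        rw [ih c]
        have hswc : Equiv.swap c p (Equiv.swap c p a) = a := Equiv.swap_apply_self _ _ _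
        have e1 : (oof (Equiv.swap c p) : A) * Efil p (Equiv.swap c p a) ((JM p) ^ k)
            = Efil p a (oof (Equiv.swap c p) * (JM p) ^ k) := by
          conv_rhs => rw [← hswc]
          rw [of_mul_Efil]
        rw [mul_assoc, e1, ← Efil_mul_of p a _ (ttp_fix_p p c b)]
      rw [Finset.sum_congr rfl hstep, ← Finset.mul_sum, ← map_sum, key_identity]
      rw [mul_assoc, ← pow_succ]
      congr 1
      conv_lhs => rw [show a = Equiv.swap b p (Equiv.swap b p a) from
        (Equiv.swap_apply_self _ _ _).symm]
      rw [of_mul_Efil]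

end Aux

/-- `D_k = E(X^k)` where `X` is the Jucys–Murphy element `Σ_{j ≠ p} (j p)`, `E` kills the
group elements moving `p`, and `D_k` is `(n+1)⁻¹` times the sum over cyclically
consecutive-distinct tuples `(i₁,…,i_k) ∈ Ω^k` of `t(i₁,i₂)⋯t(i_{k−1},i_k)t(i_k,i₁)`,
with `t(a,b)` the transposition `(a b)` unless `a = p` or `b = p`, in which case it is
the identity. -/
theorem stmt9 (n k : ℕ) (hk : 1 ≤ k) [NeZero k]
    (Ω : Type*) [Fintype Ω] [DecidableEq Ω] (hΩ : Fintype.card Ω = n + 1) (p : Ω)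
    (E : MonoidAlgebra ℝ (Equiv.Perm Ω) →ₗ[ℝ] MonoidAlgebra ℝ (Equiv.Perm Ω))
    (hE : ∀ g : Equiv.Perm Ω, E (MonoidAlgebra.of ℝ (Equiv.Perm Ω) g) =
      if g p = p then MonoidAlgebra.of ℝ (Equiv.Perm Ω) g else 0) :
    (((n : ℝ) + 1)⁻¹ •
      ∑ i ∈ Finset.univ.filter (fun i : Fin k → Ω => ∀ j : Fin k, i j ≠ i (j + 1)),
        MonoidAlgebra.of ℝ (Equiv.Perm Ω)
          ((List.ofFn fun j : Fin k =>
            if i j = p ∨ i (j + 1) = p then 1 else Equiv.swap (i j) (i (j + 1))).prod)) =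
    E ((∑ j ∈ Finset.univ.filter fun j : Ω => j ≠ p,
          MonoidAlgebra.of ℝ (Equiv.Perm Ω) (Equiv.swap j p)) ^ k) := by
  obtain ⟨k', rfl⟩ : ∃ k', k = k' + 1 := ⟨k - 1, by omega⟩
  -- E agrees with Efil p p
  have hEfil : ∀ x : MonoidAlgebra ℝ (Equiv.Perm Ω), E x = Efil p p x := by
    intro x
    induction x using MonoidAlgebra.induction_on with
    | of g => rw [hE, Efil_of]
    | add f g hf hg => rw [map_add, map_add, hf, hg]
    | smul r f hf => rw [map_smul, map_smul, hf]
  have hXJM : (∑ j ∈ Finset.univ.filter fun j : Ω => j ≠ p,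
      MonoidAlgebra.of ℝ (Equiv.Perm Ω) (Equiv.swap j p)) = JM p := rfl
  rw [hXJM, hEfil]
  -- evaluation lemma for the snoc extension of a cyclic tuple
  have hsnoc_succ : ∀ (i : Fin (k'+1) → Ω) (j : Fin (k'+1)),
      (Fin.snoc i (i 0) : Fin (k'+2) → Ω) j.succ = i (j + 1) := by
    intro i j
    refine Fin.lastCases ?_ ?_ j
    · rw [Fin.succ_last, Fin.snoc_last, Fin.last_add_one]
    · intro m
      rw [Fin.succ_castSucc, Fin.snoc_castSucc, Fin.coeSucc_eq_succ]
  -- reconstruction of a closed walk from its initial part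
  have hrecon : ∀ w : Fin (k'+2) → Ω, w (Fin.last (k'+1)) = w 0 →
      w = Fin.snoc (fun j : Fin (k'+1) => w j.castSucc)
        ((fun j : Fin (k'+1) => w j.castSucc) 0) := by
    intro w hw
    conv_lhs => rw [← Fin.snoc_init_self w]
    rw [hw]
    rfl
  -- each diagonal walk sum equals the fiber of the cyclic sum
  have hWS : ∀ a : Ω, WS p (k'+1) a a
      = ∑ i ∈ Finset.univ.filter (fun i : Fin (k'+1) → Ω =>
          (∀ j : Fin (k'+1), i j ≠ i (j + 1)) ∧ i 0 = a),
        MonoidAlgebra.of ℝ (Equiv.Perm Ω)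
          ((List.ofFn fun j : Fin (k'+1) =>
            if i j = p ∨ i (j + 1) = p then 1 else Equiv.swap (i j) (i (j + 1))).prod) := by
    intro a
    rw [WS]
    refine Finset.sum_nbij'
      (fun w => fun j : Fin (k'+1) => w j.castSucc)
      (fun i => Fin.snoc i (i 0)) ?_ ?_ ?_ ?_ ?_
    · -- walks to cyclic tuples
      intro w hw
      simp only [Finset.mem_filter, Finset.mem_univ, true_and] at hw ⊢
      obtain ⟨h0, hlast, hchain⟩ := hw
      have hweq := hrecon w (by rw [hlast, h0])
      constructor
      · intro j
        have hc := hchain j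
        rw [hweq] at hc
        rw [Fin.snoc_castSucc, hsnoc_succ] at hc
        exact hc
      · show w (Fin.castSucc 0) = a
        rw [Fin.castSucc_zero']
        exact h0
    · -- cyclic tuples to walks
      intro i hi
      simp only [Finset.mem_filter, Finset.mem_univ, true_and] at hi ⊢
      obtain ⟨hcyc, h0⟩ := hi
      refine ⟨?_, ?_, ?_⟩
      · show (Fin.snoc i (i 0) : Fin (k'+2) → Ω) (Fin.castSucc 0) = a
        rw [Fin.snoc_castSucc]
        exact h0
      · rw [Fin.snoc_last, h0]
      · intro m
        rw [Fin.snoc_castSucc, hsnoc_succ]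
        exact hcyc m
    · -- left inverse
      intro w hw
      simp only [Finset.mem_filter, Finset.mem_univ, true_and] at hw
      obtain ⟨h0, hlast, -⟩ := hw
      exact (hrecon w (by rw [hlast, h0])).symm
    · -- right inverse
      intro i _
      funext j
      show (Fin.snoc i (i 0) : Fin (k'+2) → Ω) j.castSucc = i j
      rw [Fin.snoc_castSucc]
    · -- values
      intro w hw
      simp only [Finset.mem_filter, Finset.mem_univ, true_and] at hw
      obtain ⟨h0, hlast, -⟩ := hw
      have hweq := hrecon w (by rw [hlast, h0])
      refine congrArg _ (congrArg List.prod (congrArg List.ofFn (funext fun m => ?_)))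
      show ttp p (w m.castSucc) (w m.succ)
        = ttp p ((fun j : Fin (k'+1) => w j.castSucc) m)
            ((fun j : Fin (k'+1) => w j.castSucc) (m + 1))
      conv_lhs => rw [hweq]
      rw [Fin.snoc_castSucc, hsnoc_succ]
  -- assemble
  have hfiber : ∑ a ∈ (Finset.univ : Finset Ω), WS p (k'+1) a a
      = ∑ i ∈ Finset.univ.filter (fun i : Fin (k'+1) → Ω =>
          ∀ j : Fin (k'+1), i j ≠ i (j + 1)),
        MonoidAlgebra.of ℝ (Equiv.Perm Ω)
          ((List.ofFn fun j : Fin (k'+1) =>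
            if i j = p ∨ i (j + 1) = p then 1 else Equiv.swap (i j) (i (j + 1))).prod) := by
    rw [← Finset.sum_fiberwise_of_maps_to (g := fun i : Fin (k'+1) → Ω => i 0)
      (fun i _ => Finset.mem_univ _)]
    refine Finset.sum_congr rfl fun a _ => ?_
    rw [hWS a, Finset.filter_filter]
  have hdiag : ∀ a : Ω, WS p (k'+1) a a = Efil p p ((JM p) ^ (k'+1)) := by
    intro a
    rw [WS_eq, Equiv.swap_apply_left, ← mul_assoc, ← map_mul, Equiv.swap_mul_self, map_one,
      one_mul]
  have hcount : ∑ a ∈ (Finset.univ : Finset Ω), WS p (k'+1) a a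
      = ((n : ℝ) + 1) • Efil p p ((JM p) ^ (k'+1)) := by
    rw [Finset.sum_congr rfl fun a _ => hdiag a, Finset.sum_const, Finset.card_univ, hΩ]
    rw [← Nat.cast_smul_eq_nsmul ℝ]
    norm_num
  rw [← hfiber, hcount, smul_smul, inv_mul_cancel₀ (by positivity), one_smul]
end
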